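/- arXiv:1801.01873 — 3 statements merged into one kernel-verified Lean document; each statement's English description precedes it below -/
import Mathlib

section
/- Let γ be an infinite cardinal and let I_γ = {α ≤ γ : α = 0, or α is a successor ordinal, or α = γ}, with the subspace topology from the order topology on the ordinals. Then the Cartesian product I_γ × I_γ with the product topology is homeomorphic to L_γ. -/
/-- For an infinite cardinal `γ`, the set of ordinals
`L_γ = {α ≤ γ·γ : α = γ·γ, or α = 0, or α is a successor, or α = β + γ for some β}`. -/
def Lset (γ : Cardinal) : Set Ordinal :=
  {α | α ≤ γ.ord * γ.ord ∧
    (α = γ.ord * γ.ord ∨ α = 0 ∨ (∃ β, α = β + 1) ∨ ∃ β : Ordinal, α = β + γ.ord)}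

/-- `I_γ = {α ≤ γ : α = 0, or α is a successor, or α = γ}`. -/
def Iset (γ : Cardinal) : Set Ordinal :=
  {α | α ≤ γ.ord ∧ (α = 0 ∨ (∃ β, α = β + 1) ∨ α = γ.ord)}

noncomputable section

namespace Stmt12Aux

open Ordinal Set

/-- shift map `I → I \ {0}` (Hilbert hotel on the finite part). -/
def sig (s : Ordinal) : Ordinal := if s < Ordinal.omega0 then s + 1 else s

/-- indexing bijection from isolated points of `I` onto all ordinals `< γ.ord`. -/
def pf (x : Ordinal) : Ordinal := if x = 0 then 0 else 1 + Ordinal.pred x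

/-- the main map, on raw ordinals. -/
def F (g x y : Ordinal) : Ordinal :=
  if x = g ∧ y = g then g * g
  else if x ≤ y then g * (2 * pf x) + (if x = 0 then y else sig (y - x))
  else g * (2 * pf y + 1) + (x - y)

variable {γ : Cardinal}

section Arith

theorem og_omega (hγ : Cardinal.aleph0 ≤ γ) : Ordinal.omega0 ≤ γ.ord := by
  rw [← Cardinal.ord_aleph0]; exact Cardinal.ord_le_ord.2 hγ

theorem og_lim (hγ : Cardinal.aleph0 ≤ γ) : Order.IsSuccLimit γ.ord :=
  Cardinal.isSuccLimit_ord hγ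

theorem og_pos (hγ : Cardinal.aleph0 ≤ γ) : 0 < γ.ord := (og_lim hγ).pos

theorem og_ne0 (hγ : Cardinal.aleph0 ≤ γ) : γ.ord ≠ 0 := (og_pos hγ).ne'

theorem one_lt_og (hγ : Cardinal.aleph0 ≤ γ) : 1 < γ.ord :=
  lt_of_lt_of_le Ordinal.one_lt_omega0 (og_omega hγ)

theorem two_lt_og (hγ : Cardinal.aleph0 ≤ γ) : 2 < γ.ord :=
  lt_of_lt_of_le (Ordinal.nat_lt_omega0 2) (og_omega hγ)

theorem og_absorb (hγ : Cardinal.aleph0 ≤ γ) {a : Ordinal} (h : a < γ.ord) :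
    a + γ.ord = γ.ord :=
  Ordinal.isPrincipal_add_iff_add_left_eq_self.1 (Ordinal.isPrincipal_add_ord hγ) a h

theorem og_add_lt (hγ : Cardinal.aleph0 ≤ γ) {a b : Ordinal} (ha : a < γ.ord)
    (hb : b < γ.ord) : a + b < γ.ord :=
  Ordinal.isPrincipal_add_ord hγ ha hb

theorem og_mul_lt (hγ : Cardinal.aleph0 ≤ γ) {a b : Ordinal} (ha : a < γ.ord)
    (hb : b < γ.ord) : a * b < γ.ord := by
  rw [Cardinal.lt_ord] at ha hb ⊢
  rw [Ordinal.card_mul]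
  exact Cardinal.mul_lt_of_lt hγ ha hb

theorem og_succ_lt (hγ : Cardinal.aleph0 ≤ γ) {a : Ordinal} (h : a < γ.ord) :
    a + 1 < γ.ord := by
  rw [Ordinal.add_one_eq_succ]; exact (og_lim hγ).succ_lt h

theorem og_sub (hγ : Cardinal.aleph0 ≤ γ) {a : Ordinal} (h : a < γ.ord) :
    γ.ord - a = γ.ord := by
  conv_lhs => rw [← og_absorb hγ h]
  exact Ordinal.add_sub_cancel a γ.ord

theorem one_add_le_succ (β : Ordinal) : 1 + β ≤ β + 1 := by
  rcases lt_or_ge β Ordinal.omega0 with h | h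
  · obtain ⟨n, rfl⟩ := Ordinal.lt_omega0.1 h
    rw [← Nat.cast_one, ← Nat.cast_add, ← Nat.cast_add, Nat.add_comm]
  · rw [Ordinal.one_add_of_omega0_le h]
    exact le_self_add

theorem lt_two_cases {i : Ordinal} (h : i < 2) : i = 0 ∨ i = 1 := by
  rcases lt_or_eq_of_le (show i ≤ 1 by
    exact Order.lt_succ_iff.1 (by rwa [← one_add_one_eq_two, Ordinal.add_one_eq_succ] at h)) with h1 | h1
  · exact Or.inl (Ordinal.lt_one_iff_zero.1 h1)
  · exact Or.inr h1

theorem two_mul_div (a : Ordinal) : (2 : Ordinal) * a / 2 = a := by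
  exact Ordinal.mul_div_cancel a two_ne_zero

theorem two_mul_cancel {a b : Ordinal} (h : 2 * a = 2 * b) : a = b := by
  have := congrArg (· / (2 : Ordinal)) h
  simpa [two_mul_div] using this

theorem two_mul_ne_odd {a b : Ordinal} : 2 * a ≠ 2 * b + 1 := by
  intro h
  have hd : (2 * a : Ordinal) / 2 = (2 * b + 1) / 2 := by rw [h]
  rw [two_mul_div, Ordinal.mul_add_div _ two_ne_zero,
    Ordinal.div_eq_zero_of_lt (by exact_mod_cast one_lt_two), add_zero] at hd
  subst hd
  have : (2 * a + 0 : Ordinal) = 2 * a + 1 := by simpa using h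
  exact zero_ne_one ((add_right_inj (2 * a)).1 this)

theorem nat_nonlimit {β : Ordinal} (h : β < Ordinal.omega0) :
    β = 0 ∨ ∃ k, β = k + 1 := by
  obtain ⟨n, rfl⟩ := Ordinal.lt_omega0.1 h
  cases n with
  | zero => exact Or.inl (by simp)
  | succ k => exact Or.inr ⟨k, by push_cast; ring⟩

theorem nonlimit_of_mem {x : Ordinal} (h : x = 0 ∨ ∃ β, x = β + 1) : ¬ Order.IsSuccLimit x := by
  rcases h with rfl | ⟨β, rfl⟩
  · exact Ordinal.not_isSuccLimit_zero
  · rw [Ordinal.add_one_eq_succ]; exact Order.not_isSuccLimit_succ β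

end Arith

section Mem

theorem g_mem_I : γ.ord ∈ Iset γ := ⟨le_rfl, Or.inr (Or.inr rfl)⟩

theorem zero_mem_I : (0 : Ordinal) ∈ Iset γ := ⟨zero_le, Or.inl rfl⟩

theorem mem_I_le {x : Ordinal} (h : x ∈ Iset γ) : x ≤ γ.ord := h.1

theorem mem_I_cases (hγ : Cardinal.aleph0 ≤ γ) {x : Ordinal} (h : x ∈ Iset γ) :
    x = γ.ord ∨ (x < γ.ord ∧ (x = 0 ∨ ∃ β, x = β + 1)) := by
  rcases h with ⟨hle, h0 | hs | hg⟩
  · exact Or.inr ⟨lt_of_le_of_ne hle (by rw [h0]; exact (og_ne0 hγ).symm), Or.inl h0⟩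
  · refine Or.inr ⟨lt_of_le_of_ne hle ?_, Or.inr hs⟩
    rintro rfl
    exact nonlimit_of_mem (Or.inr hs) (og_lim hγ)
  · exact Or.inl hg

/-- a point of `I` below `γ.ord` is `0` or a successor. -/
theorem mem_I_lt_cases (hγ : Cardinal.aleph0 ≤ γ) {x : Ordinal} (h : x ∈ Iset γ)
    (hlt : x < γ.ord) : x = 0 ∨ ∃ β, x = β + 1 := by
  rcases mem_I_cases hγ h with rfl | ⟨_, h2⟩
  · exact absurd hlt (lt_irrefl _)
  · exact h2

theorem sub_mem_I (hγ : Cardinal.aleph0 ≤ γ) {x y : Ordinal} (hx : x ∈ Iset γ)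
    (hy : y ∈ Iset γ) (hxy : x ≤ y) (hxg : x < γ.ord) : y - x ∈ Iset γ := by
  rcases mem_I_cases hγ hy with rfl | ⟨hylt, hy2⟩
  · rw [og_sub hγ hxg]; exact g_mem_I
  · have hsub : y - x ≤ γ.ord := le_trans (Ordinal.sub_le_self y x) (le_of_lt hylt)
    rcases hy2 with rfl | ⟨β, rfl⟩
    · have : x = 0 := le_antisymm (by simpa using hxy) (zero_le)
      subst this
      simpa using (zero_mem_I : (0:Ordinal) ∈ Iset γ)
    · rcases eq_or_lt_of_le hxy with heq | hlt'
      · rw [← heq, Ordinal.sub_self]; exact zero_mem_I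
      · -- x ≤ β, so (β+1) - x = (β - x) + 1
        have hxβ : x ≤ β := by
          rw [Ordinal.add_one_eq_succ] at hlt'
          exact Order.lt_succ_iff.1 hlt'
        have : x + ((β - x) + 1) = β + 1 := by
          rw [← add_assoc, Ordinal.add_sub_cancel_of_le hxβ]
        have heq2 : (β + 1) - x = (β - x) + 1 := by
          rw [← this, Ordinal.add_sub_cancel]
        rw [heq2] at hsub ⊢
        exact ⟨hsub, Or.inr (Or.inl ⟨β - x, rfl⟩)⟩

theorem add_mem_I (hγ : Cardinal.aleph0 ≤ γ) {y s : Ordinal} (hy : y ∈ Iset γ)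
    (hylt : y < γ.ord) (hs : s ∈ Iset γ) : y + s ∈ Iset γ := by
  rcases mem_I_cases hγ hs with rfl | ⟨hslt, hs2⟩
  · rw [og_absorb hγ hylt]; exact g_mem_I
  · have hle : y + s ≤ γ.ord := le_of_lt (og_add_lt hγ hylt hslt)
    rcases hs2 with rfl | ⟨β, rfl⟩
    · simpa using hy
    · exact ⟨hle, Or.inr (Or.inl ⟨y + β, by rw [add_assoc]⟩)⟩

theorem mem_I_L (hγ : Cardinal.aleph0 ≤ γ) {x : Ordinal} (h : x ∈ Iset γ) :
    x ∈ Lset γ := by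
  have hle : x ≤ γ.ord * γ.ord := le_trans h.1 (by
    conv_lhs => rw [← mul_one γ.ord]
    exact (mul_le_mul_iff_right₀ (og_pos hγ)).2 (Order.one_le_iff_pos.2 (og_pos hγ)))
  rcases h.2 with h0 | hs | hg
  · exact ⟨hle, Or.inr (Or.inl h0)⟩
  · exact ⟨hle, Or.inr (Or.inr (Or.inl hs))⟩
  · exact ⟨hle, Or.inr (Or.inr (Or.inr ⟨0, by rw [zero_add, hg]⟩))⟩

theorem g_lt_sq (hγ : Cardinal.aleph0 ≤ γ) : γ.ord < γ.ord * γ.ord := by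
  conv_lhs => rw [← mul_one γ.ord]
  exact (mul_lt_mul_iff_right₀ (og_pos hγ)).2 (one_lt_og hγ)

theorem L_le_g (hγ : Cardinal.aleph0 ≤ γ) {z : Ordinal} (h : z ∈ Lset γ)
    (hle : z ≤ γ.ord) : z ∈ Iset γ := by
  rcases h.2 with hsq | h0 | hs | ⟨β, rfl⟩
  · exact absurd (hsq ▸ hle) (not_le.2 (g_lt_sq hγ))
  · exact ⟨hle, Or.inl h0⟩
  · exact ⟨hle, Or.inr (Or.inl hs)⟩
  · have h2 : β + γ.ord = γ.ord := le_antisymm hle (le_add_self)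
    rw [h2]; exact g_mem_I

end Mem

section SigPf

theorem sig_of_lt {s : Ordinal} (h : s < Ordinal.omega0) : sig s = s + 1 := if_pos h

theorem sig_of_ge {s : Ordinal} (h : Ordinal.omega0 ≤ s) : sig s = s := if_neg (not_lt.2 h)

theorem sig_pos (s : Ordinal) : 0 < sig s := by
  unfold sig; split
  · exact lt_of_le_of_lt (zero_le) (lt_add_one _)
  · exact lt_of_lt_of_le Ordinal.omega0_pos (not_lt.1 (by assumption))

theorem sig_ne0 (s : Ordinal) : sig s ≠ 0 := (sig_pos s).ne'

theorem le_sig (s : Ordinal) : s ≤ sig s := by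
  unfold sig; split
  · exact le_of_lt (lt_add_one s)
  · exact le_rfl

theorem sig_le_g (hγ : Cardinal.aleph0 ≤ γ) {s : Ordinal} (h : s ≤ γ.ord) :
    sig s ≤ γ.ord := by
  rcases lt_or_ge s Ordinal.omega0 with h' | h'
  · rw [sig_of_lt h']
    have h2 : s + 1 < Ordinal.omega0 := by
      rw [Ordinal.add_one_eq_succ]; exact Ordinal.isSuccLimit_omega0.succ_lt h'
    exact le_of_lt (lt_of_lt_of_le h2 (og_omega hγ))
  · rw [sig_of_ge h']; exact h

theorem sig_lt_g (hγ : Cardinal.aleph0 ≤ γ) {s : Ordinal} (h : s < γ.ord) :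
    sig s < γ.ord := by
  unfold sig; split
  · exact lt_of_lt_of_le (by
      rw [Ordinal.add_one_eq_succ]
      exact Ordinal.isSuccLimit_omega0.succ_lt (by assumption)) (og_omega hγ)
  · exact h

theorem sig_g (hγ : Cardinal.aleph0 ≤ γ) : sig γ.ord = γ.ord :=
  sig_of_ge (og_omega hγ)

theorem sig_mem (hγ : Cardinal.aleph0 ≤ γ) {s : Ordinal} (hs : s ∈ Iset γ) :
    sig s ∈ Iset γ := by
  rcases lt_or_ge s Ordinal.omega0 with h | h
  · rw [sig_of_lt h]
    have hlt : s < γ.ord := lt_of_lt_of_le h (og_omega hγ)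
    exact ⟨le_of_lt (og_succ_lt hγ hlt), Or.inr (Or.inl ⟨s, rfl⟩)⟩
  · rw [sig_of_ge h]; exact hs

/-- `sig s` is a successor whenever `s ∈ I` and `s < γ.ord`. -/
theorem sig_succ (hγ : Cardinal.aleph0 ≤ γ) {s : Ordinal} (hs : s ∈ Iset γ)
    (h : s < γ.ord) : ∃ β, sig s = β + 1 := by
  rcases lt_or_ge s Ordinal.omega0 with h' | h'
  · exact ⟨s, sig_of_lt h'⟩
  · rw [sig_of_ge h']
    rcases mem_I_lt_cases hγ hs h with rfl | hs2
    · exact absurd h' (not_le.2 Ordinal.omega0_pos)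
    · exact hs2

theorem sig_inj {s t : Ordinal} (h : sig s = sig t) : s = t := by
  unfold sig at h
  split at h <;> split at h
  · rw [Ordinal.add_one_eq_succ, Ordinal.add_one_eq_succ] at h
    have h2 := congrArg Ordinal.pred h
    rwa [Ordinal.pred_succ, Ordinal.pred_succ] at h2
  · exfalso
    rename_i h1 h2
    have : s + 1 < Ordinal.omega0 := by
      rw [Ordinal.add_one_eq_succ]; exact Ordinal.isSuccLimit_omega0.succ_lt h1
    rw [h] at this; exact h2 this
  · exfalso
    rename_i h1 h2
    have : t + 1 < Ordinal.omega0 := by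
      rw [Ordinal.add_one_eq_succ]; exact Ordinal.isSuccLimit_omega0.succ_lt h2
    rw [← h] at this; exact h1 this
  · exact h

/-- surjectivity of `sig` with a lower-bound control. -/
theorem sig_surj_bound (hγ : Cardinal.aleph0 ≤ γ) {b r : Ordinal}
    (hr : r ∈ Iset γ) (h0 : r ≠ 0) (hgt : sig b < r) :
    ∃ t, t ∈ Iset γ ∧ b < t ∧ sig t = r := by
  rcases lt_or_ge r Ordinal.omega0 with h | h
  · -- r is a finite successor
    have hb : b < Ordinal.omega0 := by
      by_contra hb
      push_neg at hb
      rw [sig_of_ge hb] at hgt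
      exact absurd (lt_trans hgt h) (not_lt.2 hb)
    rw [sig_of_lt hb] at hgt
    rcases nat_nonlimit h with rfl | ⟨k, rfl⟩
    · exact absurd rfl h0
    · have hkw : k < Ordinal.omega0 := lt_trans (lt_add_one k) h
      refine ⟨k, ⟨le_trans (le_of_lt hkw) (og_omega hγ), ?_⟩, ?_, sig_of_lt hkw⟩
      · rcases nat_nonlimit hkw with rfl | hk2
        · exact Or.inl rfl
        · exact Or.inr (Or.inl hk2)
      · -- b + 1 < k + 1 → b < k
        have := hgt
        rw [Ordinal.add_one_eq_succ, Ordinal.add_one_eq_succ] at this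
        exact Order.succ_lt_succ_iff.1 this
  · refine ⟨r, hr, lt_of_le_of_lt (le_sig b) hgt, sig_of_ge h⟩

theorem pf_zero : pf 0 = 0 := if_pos rfl

theorem pf_succ (β : Ordinal) : pf (β + 1) = 1 + β := by
  unfold pf
  rw [if_neg (by
    intro h
    exact (Ordinal.succ_ne_zero β) (by rwa [← Ordinal.add_one_eq_succ]))]
  rw [Ordinal.add_one_eq_succ, Ordinal.pred_succ]

theorem pf_le {x : Ordinal} (h : x = 0 ∨ ∃ β, x = β + 1) : pf x ≤ x := by
  rcases h with rfl | ⟨β, rfl⟩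
  · rw [pf_zero]
  · rw [pf_succ]; exact one_add_le_succ β

theorem pf_lt_g (hγ : Cardinal.aleph0 ≤ γ) {x : Ordinal}
    (h : x = 0 ∨ ∃ β, x = β + 1) (hlt : x < γ.ord) : pf x < γ.ord := by
  rcases h with rfl | ⟨β, rfl⟩
  · rw [pf_zero]; exact og_pos hγ
  · rw [pf_succ]
    exact og_add_lt hγ (one_lt_og hγ) (lt_trans (lt_add_one β) hlt)

theorem pf_ne0 {β : Ordinal} : pf (β + 1) ≠ 0 := by
  rw [pf_succ]
  intro h
  have : (1:Ordinal) ≤ 1 + β := le_self_add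
  rw [h] at this
  exact absurd this (by norm_num)

theorem pf_inj {x y : Ordinal} (hx : x = 0 ∨ ∃ β, x = β + 1)
    (hy : y = 0 ∨ ∃ β, y = β + 1) (h : pf x = pf y) : x = y := by
  rcases hx with rfl | ⟨β, rfl⟩ <;> rcases hy with rfl | ⟨δ, rfl⟩
  · rfl
  · exact absurd (by rw [pf_zero] at h; exact h.symm) pf_ne0
  · exact absurd (by rw [pf_zero] at h; exact h) pf_ne0
  · rw [pf_succ, pf_succ] at h
    rw [(add_right_inj 1).1 h]

/-- surjectivity of `pf` onto ordinals `< γ.ord`, from isolated points of `I`. -/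
theorem pf_surj (hγ : Cardinal.aleph0 ≤ γ) {m : Ordinal} (hm : m < γ.ord) (hm0 : m ≠ 0) :
    ∃ x, x ∈ Iset γ ∧ x < γ.ord ∧ x ≠ 0 ∧ (∃ β, x = β + 1) ∧ pf x = m := by
  refine ⟨(m - 1) + 1, ⟨?_, Or.inr (Or.inl ⟨m - 1, rfl⟩)⟩, ?_, ?_, ⟨m - 1, rfl⟩, ?_⟩
  · exact le_of_lt (og_succ_lt hγ (lt_of_le_of_lt (Ordinal.sub_le_self m 1) hm))
  · exact og_succ_lt hγ (lt_of_le_of_lt (Ordinal.sub_le_self m 1) hm)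
  · intro h
    exact (Ordinal.succ_ne_zero (m-1)) (by rwa [← Ordinal.add_one_eq_succ])
  · rw [pf_succ, Ordinal.add_sub_cancel_of_le (Ordinal.one_le_iff_ne_zero.2 hm0)]

end SigPf

section Fmap

theorem mul_succ_le (hγ : Cardinal.aleph0 ≤ γ) {n m : Ordinal} (h : n < m) :
    γ.ord * n + γ.ord ≤ γ.ord * m := by
  have h1 : γ.ord * n + γ.ord = γ.ord * (n + 1) := by
    rw [Ordinal.add_one_eq_succ, Ordinal.mul_succ]
  rw [h1]
  refine (mul_le_mul_iff_right₀ (og_pos hγ)).2 ?_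
  rw [Ordinal.add_one_eq_succ]
  exact Order.succ_le_iff.2 h

theorem F_corner : F γ.ord γ.ord γ.ord = γ.ord * γ.ord := if_pos ⟨rfl, rfl⟩

theorem F_form (hγ : Cardinal.aleph0 ≤ γ) {x y : Ordinal} (hx : x ∈ Iset γ)
    (hy : y ∈ Iset γ) (hnc : ¬(x = γ.ord ∧ y = γ.ord)) :
    ∃ n s, F γ.ord x y = γ.ord * n + s ∧ n < γ.ord ∧ s ∈ Iset γ ∧ (s = 0 → n = 0) ∧
      ((x ≤ y ∧ x < γ.ord ∧ n = 2 * pf x ∧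
          ((x = 0 ∧ s = y) ∨ (x ≠ 0 ∧ s = sig (y - x))))
       ∨ (y < x ∧ y < γ.ord ∧ n = 2 * pf y + 1 ∧ s = x - y)) := by
  rcases le_or_gt x y with hxy | hyx
  · have hxg : x < γ.ord := by
      rcases lt_or_eq_of_le (mem_I_le hx) with h | h
      · exact h
      · exact absurd ⟨h, le_antisymm (mem_I_le hy) (h ▸ hxy)⟩ hnc
    have hFeq : F γ.ord x y =
        γ.ord * (2 * pf x) + (if x = 0 then y else sig (y - x)) := by
      unfold F; rw [if_neg hnc, if_pos hxy]
    by_cases hx0 : x = 0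
    · subst hx0
      rw [if_pos rfl] at hFeq
      refine ⟨2 * pf 0, y, hFeq, ?_, hy, ?_, Or.inl ⟨hxy, hxg, rfl, Or.inl ⟨rfl, rfl⟩⟩⟩
      · rw [pf_zero, mul_zero]; exact og_pos hγ
      · intro _; rw [pf_zero, mul_zero]
    · rw [if_neg hx0] at hFeq
      refine ⟨2 * pf x, sig (y - x), hFeq, ?_,
        sig_mem hγ (sub_mem_I hγ hx hy hxy hxg), ?_,
        Or.inl ⟨hxy, hxg, rfl, Or.inr ⟨hx0, rfl⟩⟩⟩
      · exact og_mul_lt hγ (two_lt_og hγ) (pf_lt_g hγ (mem_I_lt_cases hγ hx hxg) hxg)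
      · intro h; exact absurd h (sig_ne0 _)
  · have hnc2 : ¬(x = γ.ord ∧ y = γ.ord) := by
      rintro ⟨rfl, rfl⟩; exact lt_irrefl _ hyx
    have hyg : y < γ.ord := lt_of_lt_of_le hyx (mem_I_le hx)
    have hFeq : F γ.ord x y = γ.ord * (2 * pf y + 1) + (x - y) := by
      unfold F; rw [if_neg hnc2, if_neg (not_le.2 hyx)]
    refine ⟨2 * pf y + 1, x - y, hFeq, ?_,
      sub_mem_I hγ hy hx (le_of_lt hyx) hyg, ?_,
      Or.inr ⟨hyx, hyg, rfl, rfl⟩⟩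
    · exact og_add_lt hγ (og_mul_lt hγ (two_lt_og hγ)
        (pf_lt_g hγ (mem_I_lt_cases hγ hy hyg) hyg)) (one_lt_og hγ)
    · intro h
      have : (0:Ordinal) < x - y := Ordinal.lt_sub.2 (by rwa [add_zero])
      exact absurd h this.ne'

theorem mem_L_of (hγ : Cardinal.aleph0 ≤ γ) {n s : Ordinal} (hn : n < γ.ord)
    (hs : s ∈ Iset γ) (h0 : s = 0 → n = 0) : γ.ord * n + s ∈ Lset γ := by
  have hle : γ.ord * n + s ≤ γ.ord * γ.ord :=
    le_trans (add_le_add_right (mem_I_le hs) _) (mul_succ_le hγ hn)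
  rcases hs.2 with rfl | ⟨β, rfl⟩ | hg
  · rw [h0 rfl, mul_zero, add_zero]
    exact ⟨zero_le, Or.inr (Or.inl rfl)⟩
  · exact ⟨hle, Or.inr (Or.inr (Or.inl ⟨γ.ord * n + β, by rw [add_assoc]⟩))⟩
  · exact ⟨hle, Or.inr (Or.inr (Or.inr ⟨γ.ord * n, by rw [hg]⟩))⟩

theorem F_lt_sq (hγ : Cardinal.aleph0 ≤ γ) {x y : Ordinal} (hx : x ∈ Iset γ)
    (hy : y ∈ Iset γ) (hnc : ¬(x = γ.ord ∧ y = γ.ord)) :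
    F γ.ord x y < γ.ord * γ.ord := by
  obtain ⟨n, s, heq, hn, hs, -, -⟩ := F_form hγ hx hy hnc
  rw [heq]
  calc γ.ord * n + s ≤ γ.ord * n + γ.ord := add_le_add_right (mem_I_le hs) _
    _ = γ.ord * (n + 1) := by rw [Ordinal.add_one_eq_succ, Ordinal.mul_succ]
    _ < γ.ord * γ.ord := (mul_lt_mul_iff_right₀ (og_pos hγ)).2 (og_succ_lt hγ hn)

theorem F_mem (hγ : Cardinal.aleph0 ≤ γ) {x y : Ordinal} (hx : x ∈ Iset γ)
    (hy : y ∈ Iset γ) : F γ.ord x y ∈ Lset γ := by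
  by_cases hnc : x = γ.ord ∧ y = γ.ord
  · obtain ⟨rfl, rfl⟩ := hnc
    rw [F_corner]
    exact ⟨le_rfl, Or.inl rfl⟩
  · obtain ⟨n, s, heq, hn, hs, h0, -⟩ := F_form hγ hx hy hnc
    rw [heq]
    exact mem_L_of hγ hn hs h0

theorem block_unique (hγ : Cardinal.aleph0 ≤ γ) {n n' s s' : Ordinal}
    (hs : s ≤ γ.ord) (hs' : s' ≤ γ.ord)
    (h0 : s = 0 → n = 0) (h0' : s' = 0 → n' = 0)
    (heq : γ.ord * n + s = γ.ord * n' + s') : n = n' ∧ s = s' := by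
  have key : ∀ {a a' t t' : Ordinal}, a < a' → t ≤ γ.ord → (t' = 0 → a' = 0) →
      γ.ord * a + t = γ.ord * a' + t' → False := by
    intro a a' t t' hlt ht h0' heq
    have h1 : γ.ord * a + t ≤ γ.ord * a' :=
      le_trans (add_le_add_right ht _) (mul_succ_le hγ hlt)
    rw [heq] at h1
    have h2 : γ.ord * a' + t' = γ.ord * a' + 0 := by
      rw [add_zero]
      exact le_antisymm h1 (le_self_add)
    have ht0 : t' = 0 := (add_right_inj _).1 h2
    have ha0 : a' = 0 := h0' ht0
    rw [ha0] at hlt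
    exact not_lt_zero' hlt
  rcases lt_trichotomy n n' with h | h | h
  · exact absurd heq (fun he => key h hs h0' he)
  · subst h
    exact ⟨rfl, (add_right_inj _).1 heq⟩
  · exact absurd heq.symm (fun he => key h hs' h0 he)

theorem g_dvd_of_plus_g (hγ : Cardinal.aleph0 ≤ γ) {z β : Ordinal}
    (h : z = β + γ.ord) : ∃ q, z = γ.ord * (q + 1) := by
  refine ⟨β / γ.ord, ?_⟩
  have hβ : γ.ord * (β / γ.ord) + β % γ.ord = β := Ordinal.div_add_mod β γ.ord
  have h2 : z = γ.ord * (β / γ.ord) + γ.ord := by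
    rw [h]
    conv_lhs => rw [← hβ]
    rw [add_assoc, og_absorb hγ (Ordinal.mod_lt β (og_ne0 hγ))]
  rw [h2, Ordinal.add_one_eq_succ, Ordinal.mul_succ]

theorem block_extract (hγ : Cardinal.aleph0 ≤ γ) {z n s : Ordinal} (hz : z ∈ Lset γ)
    (hn : n < γ.ord) (hs0 : s ≠ 0) (hsle : s ≤ γ.ord) (heq : z = γ.ord * n + s) :
    s ∈ Iset γ := by
  rcases hz.2 with hsq | h0 | ⟨β, hsucc⟩ | ⟨β, hpg⟩
  · exfalso
    rcases lt_or_eq_of_le hsle with hlt | rfl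
    · have h1 : z / γ.ord = n := by
        rw [heq, Ordinal.mul_add_div _ (og_ne0 hγ), Ordinal.div_eq_zero_of_lt hlt,
          add_zero]
      rw [hsq, Ordinal.mul_div_cancel _ (og_ne0 hγ)] at h1
      exact hn.ne h1.symm
    · have h1 : γ.ord * (n + 1) = γ.ord * γ.ord := by
        rw [Ordinal.add_one_eq_succ, Ordinal.mul_succ, ← heq, hsq]
      have h2 : n + 1 = γ.ord := by
        have := congrArg (· / γ.ord) h1
        simpa [Ordinal.mul_div_cancel _ (og_ne0 hγ)] using this
      have := og_lim hγ
      rw [← h2] at this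
      exact nonlimit_of_mem (Or.inr ⟨n, rfl⟩) this
  · exfalso
    have : s ≤ z := heq ▸ (le_add_self : s ≤ γ.ord * n + s)
    rw [h0] at this
    exact hs0 (nonpos_iff_eq_zero.1 this)
  · rcases Ordinal.zero_or_succ_or_isSuccLimit s with rfl | ⟨a, ha⟩ | hlim
    · exact absurd rfl hs0
    · rw [← Ordinal.add_one_eq_succ] at ha
      exact ⟨hsle, Or.inr (Or.inl ⟨a, ha.symm⟩)⟩
    · exfalso
      have : Order.IsSuccLimit z := heq ▸ Ordinal.isSuccLimit_add _ hlim
      rw [hsucc, Ordinal.add_one_eq_succ] at this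
      exact Order.not_isSuccLimit_succ β this
  · rcases lt_or_eq_of_le hsle with hlt | rfl
    · exfalso
      obtain ⟨q, hq⟩ := g_dvd_of_plus_g hγ hpg
      have h1 : z % γ.ord = s := by
        rw [heq, Ordinal.mul_add_mod_self, Ordinal.mod_eq_of_lt hlt]
      rw [hq] at h1
      have h2 : γ.ord * (q+1) % γ.ord = 0 := by
        have := Ordinal.mul_add_mod_self γ.ord (q+1) 0
        simpa using this
      rw [h2] at h1
      exact hs0 h1.symm
    · exact g_mem_I

end Fmap

section Bij

theorem sig_surj (hγ : Cardinal.aleph0 ≤ γ) {r : Ordinal} (hr : r ∈ Iset γ)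
    (h0 : r ≠ 0) : ∃ t, t ∈ Iset γ ∧ sig t = r := by
  rcases lt_or_ge r Ordinal.omega0 with h | h
  · rcases nat_nonlimit h with rfl | ⟨k, rfl⟩
    · exact absurd rfl h0
    · have hkw : k < Ordinal.omega0 := lt_trans (lt_add_one k) h
      refine ⟨k, ⟨le_trans (le_of_lt hkw) (og_omega hγ), ?_⟩, sig_of_lt hkw⟩
      rcases nat_nonlimit hkw with rfl | hk2
      · exact Or.inl rfl
      · exact Or.inr (Or.inl hk2)
  · exact ⟨r, hr, sig_of_ge h⟩

theorem add_one_cancel {a b : Ordinal} (h : a + 1 = b + 1) : a = b := by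
  rw [Ordinal.add_one_eq_succ, Ordinal.add_one_eq_succ] at h
  have h2 := congrArg Ordinal.pred h
  rwa [Ordinal.pred_succ, Ordinal.pred_succ] at h2

theorem F_inj (hγ : Cardinal.aleph0 ≤ γ) {x y x' y' : Ordinal}
    (hx : x ∈ Iset γ) (hy : y ∈ Iset γ) (hx' : x' ∈ Iset γ) (hy' : y' ∈ Iset γ)
    (h : F γ.ord x y = F γ.ord x' y') : x = x' ∧ y = y' := by
  by_cases hnc : x = γ.ord ∧ y = γ.ord
  · by_cases hnc' : x' = γ.ord ∧ y' = γ.ord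
    · exact ⟨hnc.1.trans hnc'.1.symm, hnc.2.trans hnc'.2.symm⟩
    · exfalso
      obtain ⟨rfl, rfl⟩ := hnc
      rw [F_corner] at h
      exact absurd (h ▸ F_lt_sq hγ hx' hy' hnc') (lt_irrefl _)
  · by_cases hnc' : x' = γ.ord ∧ y' = γ.ord
    · exfalso
      obtain ⟨rfl, rfl⟩ := hnc'
      rw [F_corner] at h
      exact absurd (h ▸ F_lt_sq hγ hx hy hnc) (lt_irrefl _)
    · obtain ⟨n, s, heq, hn, hs, h0, hbr⟩ := F_form hγ hx hy hnc
      obtain ⟨n', s', heq', hn', hs', h0', hbr'⟩ := F_form hγ hx' hy' hnc'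
      rw [heq, heq'] at h
      obtain ⟨hnn, hss⟩ := block_unique hγ (mem_I_le hs) (mem_I_le hs') h0 h0' h
      rcases hbr with ⟨hxy, hxg, hneq, hcol⟩ | ⟨hyx, hyg, hneq, hrow⟩ <;>
        rcases hbr' with ⟨hxy', hxg', hneq', hcol'⟩ | ⟨hyx', hyg', hneq', hrow'⟩
      · -- col / col
        have hpf : pf x = pf x' := two_mul_cancel (hneq ▸ hneq' ▸ hnn)
        have hxx : x = x' :=
          pf_inj (mem_I_lt_cases hγ hx hxg) (mem_I_lt_cases hγ hx' hxg') hpf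
        subst hxx
        refine ⟨rfl, ?_⟩
        rcases hcol with ⟨hx0, rfl⟩ | ⟨hx0, rfl⟩ <;>
          rcases hcol' with ⟨hx0', hs'e⟩ | ⟨hx0', hs'e⟩
        · rw [hss, hs'e]
        · exact absurd hx0 hx0'
        · exact absurd hx0' hx0
        · have : y - x = y' - x := sig_inj (hss ▸ hs'e ▸ rfl)
          have h1 : x + (y - x) = y := Ordinal.add_sub_cancel_of_le hxy
          have h2 : x + (y' - x) = y' := Ordinal.add_sub_cancel_of_le hxy'
          rw [← h1, ← h2, this]
      · -- col / row : parity contradiction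
        exfalso
        exact two_mul_ne_odd (hneq ▸ hneq' ▸ hnn)
      · -- row / col
        exfalso
        exact two_mul_ne_odd (hneq' ▸ hneq ▸ hnn.symm)
      · -- row / row
        have hpf : pf y = pf y' :=
          two_mul_cancel (add_one_cancel (hneq ▸ hneq' ▸ hnn))
        have hyy : y = y' :=
          pf_inj (mem_I_lt_cases hγ hy hyg) (mem_I_lt_cases hγ hy' hyg') hpf
        subst hyy
        refine ⟨?_, rfl⟩
        have : x - y = x' - y := hrow ▸ hrow' ▸ hss
        have h1 : y + (x - y) = x := Ordinal.add_sub_cancel_of_le (le_of_lt hyx)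
        have h2 : y + (x' - y) = x' := Ordinal.add_sub_cancel_of_le (le_of_lt hyx')
        rw [← h1, ← h2, this]

theorem F_zero_left (hγ : Cardinal.aleph0 ≤ γ) {z : Ordinal} :
    F γ.ord 0 z = z := by
  unfold F
  rw [if_neg (by rintro ⟨h, -⟩; exact (og_ne0 hγ) h.symm), if_pos (zero_le : (0:Ordinal) ≤ z),
    if_pos rfl, pf_zero, mul_zero, mul_zero, zero_add]

theorem F_surj (hγ : Cardinal.aleph0 ≤ γ) {z : Ordinal} (hz : z ∈ Lset γ) :
    ∃ x y, x ∈ Iset γ ∧ y ∈ Iset γ ∧ F γ.ord x y = z := by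
  by_cases hsq : z = γ.ord * γ.ord
  · exact ⟨γ.ord, γ.ord, g_mem_I, g_mem_I, by rw [F_corner, hsq]⟩
  have hzlt : z < γ.ord * γ.ord := lt_of_le_of_ne hz.1 hsq
  by_cases hzg : z ≤ γ.ord
  · exact ⟨0, z, zero_mem_I, L_le_g hγ hz hzg, F_zero_left hγ⟩
  push_neg at hzg
  -- produce a block decomposition z = γ.ord * n + s
  obtain ⟨n, s, hn0, hn, hs, hs0, heq⟩ :
      ∃ n s, n ≠ 0 ∧ n < γ.ord ∧ s ∈ Iset γ ∧ s ≠ 0 ∧ z = γ.ord * n + s := by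
    have hqr : γ.ord * (z / γ.ord) + z % γ.ord = z := Ordinal.div_add_mod z γ.ord
    by_cases hr : z % γ.ord = 0
    · -- z is a positive multiple of γ.ord; from z ∈ L it must be γ.ord * (q+1)
      rcases hz.2 with h1 | h1 | ⟨β, h1⟩ | ⟨β, h1⟩
      · exact absurd h1 hsq
      · exact absurd h1 (by intro h; rw [h] at hzg; exact absurd hzg (by simp))
      · exfalso
        have hq0 : z / γ.ord ≠ 0 := by
          intro h
          rw [h, mul_zero, zero_add] at hqr
          rw [← hqr, hr] at hzg
          exact absurd hzg (by simp)
        have hlim : Order.IsSuccLimit z := by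
          rw [← hqr, hr, add_zero]
          exact Ordinal.isSuccLimit_mul_left (og_lim hγ) (pos_iff_ne_zero.2 hq0)
        rw [h1, Ordinal.add_one_eq_succ] at hlim
        exact Order.not_isSuccLimit_succ β hlim
      · obtain ⟨q, hq⟩ := g_dvd_of_plus_g hγ h1
        have hzeq : z = γ.ord * q + γ.ord := by
          rw [hq, Ordinal.add_one_eq_succ, Ordinal.mul_succ]
        have hq0 : q ≠ 0 := by
          rintro rfl
          rw [mul_zero, zero_add] at hzeq
          exact absurd hzeq.le (not_le.2 hzg)
        have hqlt : q < γ.ord := by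
          by_contra hc
          push_neg at hc
          have h2 : γ.ord * γ.ord ≤ γ.ord * q :=
            (mul_le_mul_iff_right₀ (og_pos hγ)).2 hc
          have h3 : γ.ord * γ.ord ≤ z := le_trans h2 (by rw [hzeq]; exact le_self_add)
          exact absurd hzlt (not_lt.2 h3)
        exact ⟨q, γ.ord, hq0, hqlt, g_mem_I, og_ne0 hγ, hzeq⟩
    · have hmod : z % γ.ord < γ.ord := Ordinal.mod_lt z (og_ne0 hγ)
      refine ⟨z / γ.ord, z % γ.ord, ?_, ?_, ?_, hr, hqr.symm⟩
      · intro h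
        rw [h, mul_zero, zero_add] at hqr
        exact absurd (hqr ▸ hmod) (not_lt.2 (le_of_lt hzg))
      · by_contra hc
        push_neg at hc
        have h2 : γ.ord * γ.ord ≤ γ.ord * (z / γ.ord) :=
          (mul_le_mul_iff_right₀ (og_pos hγ)).2 hc
        have h3 : γ.ord * γ.ord ≤ z := le_trans h2 (le_trans (le_self_add) (le_of_eq hqr))
        exact absurd hzlt (not_lt.2 h3)
      · exact block_extract hγ hz (by
          by_contra hc
          push_neg at hc
          have h2 : γ.ord * γ.ord ≤ γ.ord * (z / γ.ord) :=
            (mul_le_mul_iff_right₀ (og_pos hγ)).2 hc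
          have h3 : γ.ord * γ.ord ≤ z := le_trans h2 (le_trans (le_self_add) (le_of_eq hqr))
          exact absurd hzlt (not_lt.2 h3)) hr (le_of_lt hmod) hqr.symm
  -- now split n into 2*m or 2*m+1
  have hsplit : 2 * (n / 2) + n % 2 = n := Ordinal.div_add_mod n 2
  have hi2 : n % 2 < 2 := Ordinal.mod_lt n two_ne_zero
  have hmlt : n / 2 < γ.ord := by
    refine lt_of_le_of_lt ?_ hn
    rw [Ordinal.div_le two_ne_zero]
    exact lt_of_lt_of_le (Order.lt_succ n) (Ordinal.le_mul_right _ (by norm_num))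
  rcases lt_two_cases hi2 with hi | hi
  · -- even block : column
    rw [hi, add_zero] at hsplit
    have hm0 : n / 2 ≠ 0 := by
      rintro h
      rw [h, mul_zero] at hsplit
      exact hn0 hsplit.symm
    obtain ⟨x, hxI, hxlt, hx0, -, hpfx⟩ := pf_surj hγ hmlt hm0
    obtain ⟨t, htI, hts⟩ := sig_surj hγ hs hs0
    refine ⟨x, x + t, hxI, add_mem_I hγ hxI hxlt htI, ?_⟩
    have hnc : ¬(x = γ.ord ∧ x + t = γ.ord) := fun h => hxlt.ne h.1
    unfold F
    rw [if_neg hnc, if_pos (le_self_add : x ≤ x + t), if_neg hx0,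
      Ordinal.add_sub_cancel, hts, hpfx, hsplit, ← heq]
  · -- odd block : row
    rw [hi] at hsplit
    obtain ⟨y, hyI, hylt, hpfy⟩ : ∃ y, y ∈ Iset γ ∧ y < γ.ord ∧ pf y = n / 2 := by
      by_cases hm0 : n / 2 = 0
      · exact ⟨0, zero_mem_I, og_pos hγ, by rw [pf_zero, hm0]⟩
      · obtain ⟨x, hxI, hxlt, -, -, hpfx⟩ := pf_surj hγ hmlt hm0
        exact ⟨x, hxI, hxlt, hpfx⟩
    refine ⟨y + s, y, add_mem_I hγ hyI hylt hs, hyI, ?_⟩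
    have hyx : y < y + s := by
      conv_lhs => rw [← add_zero y]
      exact (add_lt_add_iff_left y).2 (pos_iff_ne_zero.2 hs0)
    have hnc : ¬(y + s = γ.ord ∧ y = γ.ord) := fun h => hylt.ne h.2
    unfold F
    rw [if_neg hnc, if_neg (not_le.2 hyx), Ordinal.add_sub_cancel, hpfy, hsplit, ← heq]

end Bij

section Bounds

theorem le_pf_of_lt (hγ : Cardinal.aleph0 ≤ γ) {x q : Ordinal} (hx : x ∈ Iset γ)
    (hxg : x < γ.ord) (h : q < x) : q ≤ pf x := by
  rcases mem_I_lt_cases hγ hx hxg with rfl | ⟨β, rfl⟩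
  · exact absurd h (not_lt_zero')
  · have hq : q ≤ β := by
      rw [Ordinal.add_one_eq_succ] at h
      exact Order.lt_succ_iff.1 h
    rw [pf_succ]
    exact le_trans hq (le_add_self)

theorem F_ge_block (hγ : Cardinal.aleph0 ≤ γ) {x y q : Ordinal}
    (hx : x ∈ Iset γ) (hy : y ∈ Iset γ) (hq : q < γ.ord)
    (hbx : 2 * q + 1 < x) (hby : 2 * q + 1 < y) :
    γ.ord * q ≤ F γ.ord x y := by
  have twopos : (0:Ordinal) < 2 := by norm_num
  by_cases hnc : x = γ.ord ∧ y = γ.ord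
  · obtain ⟨rfl, rfl⟩ := hnc
    rw [F_corner]
    exact (mul_le_mul_iff_right₀ (og_pos hγ)).2 hq.le
  · obtain ⟨n, s, heq, hn, hs, h0, hbr⟩ := F_form hγ hx hy hnc
    have hqn : q ≤ n := by
      rcases hbr with ⟨hxy, hxg, rfl, -⟩ | ⟨hyx, hyg, rfl, -⟩
      · have h1 : q ≤ pf x :=
          le_trans (le_trans (Ordinal.le_mul_right q twopos)
            (le_self_add)) (le_pf_of_lt hγ hx hxg hbx)
        exact le_trans h1 (Ordinal.le_mul_right _ twopos)
      · have h1 : q ≤ pf y :=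
          le_trans (le_trans (Ordinal.le_mul_right q twopos)
            (le_self_add)) (le_pf_of_lt hγ hy hyg hby)
        exact le_trans h1 (le_trans (Ordinal.le_mul_right _ twopos)
          (le_self_add))
    rw [heq]
    exact le_trans ((mul_le_mul_iff_right₀ (og_pos hγ)).2 hqn)
      (le_self_add)

theorem F_gt_bounds (hγ : Cardinal.aleph0 ≤ γ) {x y b : Ordinal}
    (hx : x ∈ Iset γ) (hy : y ∈ Iset γ) (hb : b < γ.ord)
    (h : γ.ord * (2 * (b + 1) + 1) < F γ.ord x y) : b < x ∧ b < y := by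
  by_cases hnc : x = γ.ord ∧ y = γ.ord
  · exact ⟨hnc.1 ▸ hb, hnc.2 ▸ hb⟩
  · obtain ⟨n, s, heq, hn, hs, h0, hbr⟩ := F_form hγ hx hy hnc
    -- from the bound, 2*(b+1)+1 ≤ n
    have hbn : 2 * (b + 1) + 1 ≤ n := by
      have h1 : F γ.ord x y ≤ γ.ord * (n + 1) := by
        rw [heq, Ordinal.add_one_eq_succ, Ordinal.mul_succ]
        exact add_le_add_right (mem_I_le hs) _
      have h2 : γ.ord * (2 * (b + 1) + 1) < γ.ord * (n + 1) := lt_of_lt_of_le h h1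
      have h3 : 2 * (b + 1) + 1 < n + 1 :=
        (mul_lt_mul_iff_right₀ (og_pos hγ)).1 h2
      rw [Ordinal.add_one_eq_succ n] at h3
      exact Order.lt_succ_iff.1 h3
    have key : ∀ w : Ordinal, 2 * (b + 1) ≤ 2 * pf w → w ∈ Iset γ → w < γ.ord → b < w := by
      intro w hw hwI hwg
      have h1 : b + 1 ≤ pf w := by
        by_contra hc
        push_neg at hc
        have h2 : 2 * pf w < 2 * (b+1) :=
          (mul_lt_mul_iff_right₀ (by norm_num : (0:Ordinal) < 2)).2 hc
        exact absurd (lt_of_lt_of_le h2 hw) (lt_irrefl _)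
      have h2 : b + 1 ≤ w := le_trans h1 (pf_le (mem_I_lt_cases hγ hwI hwg))
      exact lt_of_lt_of_le (lt_add_one b) h2
    rcases hbr with ⟨hxy, hxg, rfl, -⟩ | ⟨hyx, hyg, rfl, -⟩
    · have hbx : b < x := key x (le_trans (le_self_add) hbn) hx hxg
      exact ⟨hbx, lt_of_lt_of_le hbx hxy⟩
    · have h4 : 2 * (b+1) ≤ 2 * pf y := by
        have := hbn
        rw [Ordinal.add_one_eq_succ (2*(b+1)), Ordinal.add_one_eq_succ (2 * pf y)] at this
        exact Order.succ_le_succ_iff.1 this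
      have hby : b < y := key y h4 hy hyg
      exact ⟨lt_trans hby hyx, hby⟩

theorem F_isolated_form (hγ : Cardinal.aleph0 ≤ γ) {x y : Ordinal}
    (hx : x ∈ Iset γ) (hy : y ∈ Iset γ) (hxg : x ≠ γ.ord) (hyg : y ≠ γ.ord) :
    F γ.ord x y = 0 ∨ ∃ β, F γ.ord x y = β + 1 := by
  have hxg' : x < γ.ord := lt_of_le_of_ne (mem_I_le hx) hxg
  have hyg' : y < γ.ord := lt_of_le_of_ne (mem_I_le hy) hyg
  have hnc : ¬(x = γ.ord ∧ y = γ.ord) := fun h => hxg h.1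
  obtain ⟨n, s, heq, hn, hs, h0, hbr⟩ := F_form hγ hx hy hnc
  have hscases : s = 0 ∨ ∃ β, s = β + 1 := by
    rcases hbr with ⟨hxy, hxg2, -, hcol⟩ | ⟨hyx, hyg2, -, rfl⟩
    · rcases hcol with ⟨-, rfl⟩ | ⟨hx0, rfl⟩
      · exact mem_I_lt_cases hγ hy hyg'
      · refine Or.inr (sig_succ hγ (sub_mem_I hγ hx hy hxy hxg2) ?_)
        exact lt_of_le_of_lt (Ordinal.sub_le_self y x) hyg'
    · refine mem_I_lt_cases hγ (sub_mem_I hγ hy hx hyx.le hyg2) ?_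
      exact lt_of_le_of_lt (Ordinal.sub_le_self x y) hxg'
  rcases hscases with rfl | ⟨β, rfl⟩
  · rw [heq, h0 rfl, mul_zero, add_zero]
    exact Or.inl rfl
  · rw [heq, ← add_assoc]
    exact Or.inr ⟨γ.ord * n + β, rfl⟩

end Bounds

section Eval

theorem F_col_eval (hγ : Cardinal.aleph0 ≤ γ) {u y : Ordinal} (hu0 : u ≠ 0)
    (hug : u < γ.ord) (huy : u ≤ y) :
    F γ.ord u y = γ.ord * (2 * pf u) + sig (y - u) := by
  unfold F
  rw [if_neg (fun h => hug.ne h.1), if_pos huy, if_neg hu0]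

theorem F_row_eval (hγ : Cardinal.aleph0 ≤ γ) {x v : Ordinal} (hvg : v < γ.ord)
    (hvx : v < x) :
    F γ.ord x v = γ.ord * (2 * pf v + 1) + (x - v) := by
  unfold F
  rw [if_neg (fun h => hvg.ne h.2), if_neg (not_le.2 hvx)]

theorem F_top_right (hγ : Cardinal.aleph0 ≤ γ) {u : Ordinal} (hu0 : u ≠ 0)
    (hug : u < γ.ord) :
    F γ.ord u γ.ord = γ.ord * (2 * pf u) + γ.ord := by
  rw [F_col_eval hγ hu0 hug hug.le, og_sub hγ hug, sig_g hγ]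

theorem F_top_left (hγ : Cardinal.aleph0 ≤ γ) {v : Ordinal} (hvg : v < γ.ord) :
    F γ.ord γ.ord v = γ.ord * (2 * pf v + 1) + γ.ord := by
  rw [F_row_eval hγ hvg hvg, og_sub hγ hvg]

theorem F_top_right_pos (hγ : Cardinal.aleph0 ≤ γ) {u : Ordinal} (hu : u ∈ Iset γ)
    (hug : u < γ.ord) : 0 < F γ.ord u γ.ord := by
  by_cases hu0 : u = 0
  · subst hu0; rw [F_zero_left hγ]; exact og_pos hγ
  · rw [F_top_right hγ hu0 hug]
    exact lt_of_lt_of_le (og_pos hγ) (le_add_self)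

theorem F_le_sq (hγ : Cardinal.aleph0 ≤ γ) {x y : Ordinal} (hx : x ∈ Iset γ)
    (hy : y ∈ Iset γ) : F γ.ord x y ≤ γ.ord * γ.ord := by
  by_cases hnc : x = γ.ord ∧ y = γ.ord
  · obtain ⟨rfl, rfl⟩ := hnc; rw [F_corner]
  · exact (F_lt_sq hγ hx hy hnc).le

end Eval

section CLOL

/-- continuity bound, column case. -/
theorem CL1 (hγ : Cardinal.aleph0 ≤ γ) {u : Ordinal} (hu : u ∈ Iset γ)
    (hug : u < γ.ord) {c : Ordinal} (hc : c < F γ.ord u γ.ord) :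
    ∃ b < γ.ord, ∀ y, y ∈ Iset γ → b < y →
      c < F γ.ord u y ∧ F γ.ord u y ≤ F γ.ord u γ.ord := by
  by_cases hu0 : u = 0
  · subst hu0
    rw [F_zero_left hγ] at hc
    refine ⟨c, hc, fun y hy hcy => ?_⟩
    rw [F_zero_left hγ, F_zero_left hγ]
    exact ⟨hcy, mem_I_le hy⟩
  · rw [F_top_right hγ hu0 hug] at hc ⊢
    have upper : ∀ y, y ∈ Iset γ → u ≤ y →
        F γ.ord u y ≤ γ.ord * (2 * pf u) + γ.ord := by
      intro y hy huy
      rw [F_col_eval hγ hu0 hug huy]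
      exact add_le_add_right
        (sig_le_g hγ (le_trans (Ordinal.sub_le_self y u) (mem_I_le hy))) _
    rcases le_or_gt c (γ.ord * (2 * pf u)) with hcn | hcn
    · refine ⟨u, hug, fun y hy huy => ?_⟩
      refine ⟨?_, upper y hy huy.le⟩
      rw [F_col_eval hγ hu0 hug huy.le]
      exact lt_of_le_of_lt hcn (lt_add_of_pos_right _ (sig_pos _))
    · have hd : γ.ord * (2 * pf u) + (c - γ.ord * (2 * pf u)) = c :=
        Ordinal.add_sub_cancel_of_le hcn.le
      have hdg : c - γ.ord * (2 * pf u) < γ.ord :=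
        Ordinal.sub_lt_of_lt_add hc (og_pos hγ)
      refine ⟨u + (c - γ.ord * (2 * pf u)), og_add_lt hγ hug hdg, fun y hy hby => ?_⟩
      have huy : u ≤ y := le_trans (le_self_add) hby.le
      refine ⟨?_, upper y hy huy⟩
      rw [F_col_eval hγ hu0 hug huy, ← hd]
      refine (add_lt_add_iff_left _).2 ?_
      exact lt_of_lt_of_le (Ordinal.lt_sub.2 hby) (le_sig _)

/-- continuity bound, row case. -/
theorem CL2 (hγ : Cardinal.aleph0 ≤ γ) {v : Ordinal} (hv : v ∈ Iset γ)
    (hvg : v < γ.ord) {c : Ordinal} (hc : c < F γ.ord γ.ord v) :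
    ∃ b < γ.ord, ∀ x, x ∈ Iset γ → b < x →
      c < F γ.ord x v ∧ F γ.ord x v ≤ F γ.ord γ.ord v := by
  rw [F_top_left hγ hvg] at hc ⊢
  have upper : ∀ x, x ∈ Iset γ → v < x →
      F γ.ord x v ≤ γ.ord * (2 * pf v + 1) + γ.ord := by
    intro x hx hvx
    rw [F_row_eval hγ hvg hvx]
    exact add_le_add_right (le_trans (Ordinal.sub_le_self x v) (mem_I_le hx)) _
  rcases le_or_gt c (γ.ord * (2 * pf v + 1)) with hcn | hcn
  · refine ⟨v, hvg, fun x hx hvx => ?_⟩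
    refine ⟨?_, upper x hx hvx⟩
    rw [F_row_eval hγ hvg hvx]
    refine lt_of_le_of_lt hcn (lt_add_of_pos_right _ ?_)
    exact Ordinal.lt_sub.2 (by rwa [add_zero])
  · have hd : γ.ord * (2 * pf v + 1) + (c - γ.ord * (2 * pf v + 1)) = c :=
      Ordinal.add_sub_cancel_of_le hcn.le
    have hdg : c - γ.ord * (2 * pf v + 1) < γ.ord :=
      Ordinal.sub_lt_of_lt_add hc (og_pos hγ)
    refine ⟨v + (c - γ.ord * (2 * pf v + 1)), og_add_lt hγ hvg hdg, fun x hx hbx => ?_⟩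
    have hvx : v < x := lt_of_le_of_lt (le_self_add) hbx
    refine ⟨?_, upper x hx hvx⟩
    rw [F_row_eval hγ hvg hvx, ← hd]
    exact (add_lt_add_iff_left _).2 (Ordinal.lt_sub.2 hbx)

/-- continuity bound, corner case. -/
theorem CL3 (hγ : Cardinal.aleph0 ≤ γ) {c : Ordinal} (hc : c < γ.ord * γ.ord) :
    ∃ b < γ.ord, ∀ x y, x ∈ Iset γ → y ∈ Iset γ → b < x → b < y →
      c < F γ.ord x y ∧ F γ.ord x y ≤ γ.ord * γ.ord := by
  have hqlt : c / γ.ord < γ.ord := by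
    rw [Ordinal.div_lt (og_ne0 hγ)]
    exact hc
  have hq : c < γ.ord * (c / γ.ord + 1) := by
    rw [Ordinal.add_one_eq_succ, Ordinal.mul_succ]
    conv_lhs => rw [← Ordinal.div_add_mod c γ.ord]
    exact (add_lt_add_iff_left _).2 (Ordinal.mod_lt c (og_ne0 hγ))
  set q := c / γ.ord + 1 with hqdef
  have hqg : q < γ.ord := og_succ_lt hγ hqlt
  refine ⟨2 * q + 1, og_add_lt hγ (og_mul_lt hγ (two_lt_og hγ) hqg) (one_lt_og hγ),
    fun x y hx hy hbx hby => ?_⟩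
  exact ⟨lt_of_lt_of_le hq (F_ge_block hγ hx hy hqg hbx hby), F_le_sq hγ hx hy⟩

/-- openness bound, column case. -/
theorem OL1 (hγ : Cardinal.aleph0 ≤ γ) {u : Ordinal} (hu : u ∈ Iset γ)
    (hug : u < γ.ord) {b : Ordinal} (hb : b < γ.ord) :
    ∃ c < F γ.ord u γ.ord, ∀ z, z ∈ Lset γ → c < z → z ≤ F γ.ord u γ.ord →
      ∃ y, y ∈ Iset γ ∧ b < y ∧ F γ.ord u y = z := by
  by_cases hu0 : u = 0
  · subst hu0
    rw [F_zero_left hγ]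
    refine ⟨b, hb, fun z hz hbz hzg => ?_⟩
    exact ⟨z, L_le_g hγ hz hzg, hbz, F_zero_left hγ⟩
  · rw [F_top_right hγ hu0 hug]
    set n := 2 * pf u with hndef
    refine ⟨γ.ord * n + sig b, (add_lt_add_iff_left _).2 (sig_lt_g hγ hb),
      fun z hz hcz hzle => ?_⟩
    have hgnz : γ.ord * n ≤ z :=
      le_trans (le_trans (le_self_add) hcz.le) le_rfl
    have hs'eq : γ.ord * n + (z - γ.ord * n) = z := Ordinal.add_sub_cancel_of_le hgnz
    set s' := z - γ.ord * n with hs'def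
    have hs'le : s' ≤ γ.ord := by
      have := hzle
      rw [← hs'eq] at this
      exact (add_le_add_iff_left _).1 this
    have hs'gt : sig b < s' := by
      have := hcz
      rw [← hs'eq] at this
      exact (add_lt_add_iff_left _).1 this
    have hs'0 : s' ≠ 0 := fun h => by
      rw [h] at hs'gt
      exact absurd hs'gt (not_lt.2 (sig_pos b).le)
    have hs'I : s' ∈ Iset γ := block_extract hγ hz
      (og_mul_lt hγ (two_lt_og hγ) (pf_lt_g hγ (mem_I_lt_cases hγ hu hug) hug))
      hs'0 hs'le hs'eq.symm
    obtain ⟨t, htI, hbt, hts⟩ := sig_surj_bound hγ hs'I hs'0 hs'gt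
    refine ⟨u + t, add_mem_I hγ hu hug htI, lt_of_lt_of_le hbt (le_add_self), ?_⟩
    rw [F_col_eval hγ hu0 hug (le_self_add), Ordinal.add_sub_cancel,
      hts, ← hndef, hs'eq]

/-- openness bound, row case. -/
theorem OL2 (hγ : Cardinal.aleph0 ≤ γ) {v : Ordinal} (hv : v ∈ Iset γ)
    (hvg : v < γ.ord) {b : Ordinal} (hb : b < γ.ord) :
    ∃ c < F γ.ord γ.ord v, ∀ z, z ∈ Lset γ → c < z → z ≤ F γ.ord γ.ord v →
      ∃ x, x ∈ Iset γ ∧ b < x ∧ F γ.ord x v = z := by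
  rw [F_top_left hγ hvg]
  set n := 2 * pf v + 1 with hndef
  refine ⟨γ.ord * n + b, (add_lt_add_iff_left _).2 hb, fun z hz hcz hzle => ?_⟩
  have hgnz : γ.ord * n ≤ z := le_trans (le_self_add) hcz.le
  have hs'eq : γ.ord * n + (z - γ.ord * n) = z := Ordinal.add_sub_cancel_of_le hgnz
  set s' := z - γ.ord * n with hs'def
  have hs'le : s' ≤ γ.ord := by
    have := hzle
    rw [← hs'eq] at this
    exact (add_le_add_iff_left _).1 this
  have hs'gt : b < s' := by
    have := hcz
    rw [← hs'eq] at this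
    exact (add_lt_add_iff_left _).1 this
  have hs'0 : s' ≠ 0 := fun h => by
    rw [h] at hs'gt
    exact absurd hs'gt (not_lt_zero')
  have hs'I : s' ∈ Iset γ := block_extract hγ hz
    (og_add_lt hγ (og_mul_lt hγ (two_lt_og hγ)
      (pf_lt_g hγ (mem_I_lt_cases hγ hv hvg) hvg)) (one_lt_og hγ))
    hs'0 hs'le hs'eq.symm
  refine ⟨v + s', add_mem_I hγ hv hvg hs'I,
    lt_of_lt_of_le hs'gt (le_add_self), ?_⟩
  have hvx : v < v + s' := by
    conv_lhs => rw [← add_zero v]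
    exact (add_lt_add_iff_left v).2 (pos_iff_ne_zero.2 hs'0)
  rw [F_row_eval hγ hvg hvx, Ordinal.add_sub_cancel, ← hndef, hs'eq]

/-- openness bound, corner case. -/
theorem OL3 (hγ : Cardinal.aleph0 ≤ γ) {b : Ordinal} (hb : b < γ.ord) :
    ∃ c < γ.ord * γ.ord, ∀ z, z ∈ Lset γ → c < z →
      ∃ x y, x ∈ Iset γ ∧ y ∈ Iset γ ∧ b < x ∧ b < y ∧ F γ.ord x y = z := by
  refine ⟨γ.ord * (2 * (b + 1) + 1), ?_, fun z hz hcz => ?_⟩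
  · exact (mul_lt_mul_iff_right₀ (og_pos hγ)).2
      (og_add_lt hγ (og_mul_lt hγ (two_lt_og hγ) (og_succ_lt hγ hb)) (one_lt_og hγ))
  · obtain ⟨x, y, hx, hy, hF⟩ := F_surj hγ hz
    rw [← hF] at hcz
    obtain ⟨hbx, hby⟩ := F_gt_bounds hγ hx hy hb hcz
    exact ⟨x, y, hx, hy, hbx, hby, hF⟩

end CLOL

section Top

theorem isolated_I (hγ : Cardinal.aleph0 ≤ γ) (u : ↥(Iset γ))
    (h : (u : Ordinal) ≠ γ.ord) : IsOpen ({u} : Set ↥(Iset γ)) := by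
  have heq : ({u} : Set ↥(Iset γ)) = Subtype.val ⁻¹' {(u : Ordinal)} := by
    ext w
    simp [Subtype.ext_iff]
  rw [heq]
  refine (Ordinal.isOpen_singleton_iff.2 ?_).preimage continuous_subtype_val
  exact nonlimit_of_mem (mem_I_lt_cases hγ u.2 (lt_of_le_of_ne (mem_I_le u.2) h))

theorem isolated_L (z : ↥(Lset γ))
    (h : (z : Ordinal) = 0 ∨ ∃ β, (z : Ordinal) = β + 1) :
    IsOpen ({z} : Set ↥(Lset γ)) := by
  have heq : ({z} : Set ↥(Lset γ)) = Subtype.val ⁻¹' {(z : Ordinal)} := by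
    ext w
    simp [Subtype.ext_iff]
  rw [heq]
  exact (Ordinal.isOpen_singleton_iff.2 (nonlimit_of_mem h)).preimage
    continuous_subtype_val

theorem mem_nhds_top_I (hγ : Cardinal.aleph0 ≤ γ) {u : ↥(Iset γ)}
    (hu : (u : Ordinal) = γ.ord) {V : Set ↥(Iset γ)} (hV : V ∈ nhds u) :
    ∃ b < γ.ord, ∀ w : ↥(Iset γ), b < (w : Ordinal) → w ∈ V := by
  rw [mem_nhds_subtype] at hV
  obtain ⟨W, hW, hWV⟩ := hV
  rw [hu] at hW
  obtain ⟨b, hb, hIoc⟩ := (SuccOrder.hasBasis_nhds_Ioc_of_exists_lt ⟨0, og_pos hγ⟩).mem_iff.1 hW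
  exact ⟨b, hb, fun w hw => hWV (hIoc ⟨hw, mem_I_le w.2⟩)⟩

theorem Ioc_mem_nhds_I (hγ : Cardinal.aleph0 ≤ γ) {u : ↥(Iset γ)}
    (hu : (u : Ordinal) = γ.ord) {b : Ordinal} (hb : b < γ.ord) :
    (Subtype.val ⁻¹' Set.Ioc b γ.ord : Set ↥(Iset γ)) ∈ nhds u := by
  rw [mem_nhds_subtype]
  refine ⟨Set.Ioc b γ.ord, ?_, subset_rfl⟩
  rw [hu]
  exact (SuccOrder.hasBasis_nhds_Ioc_of_exists_lt ⟨0, og_pos hγ⟩).mem_of_mem hb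

theorem mem_nhds_L {z : ↥(Lset γ)} (hz0 : (z : Ordinal) ≠ 0) {V : Set ↥(Lset γ)}
    (hV : V ∈ nhds z) :
    ∃ c < (z : Ordinal), ∀ w : ↥(Lset γ),
      c < (w : Ordinal) → (w : Ordinal) ≤ (z : Ordinal) → w ∈ V := by
  rw [mem_nhds_subtype] at hV
  obtain ⟨W, hW, hWV⟩ := hV
  obtain ⟨c, hc, hIoc⟩ := (SuccOrder.hasBasis_nhds_Ioc_of_exists_lt ⟨0, pos_iff_ne_zero.2 hz0⟩).mem_iff.1 hW
  exact ⟨c, hc, fun w hw hwle => hWV (hIoc ⟨hw, hwle⟩)⟩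

theorem Ioc_mem_nhds_L {z : ↥(Lset γ)} (hz0 : (z : Ordinal) ≠ 0) {c : Ordinal}
    (hc : c < (z : Ordinal)) :
    (Subtype.val ⁻¹' Set.Ioc c (z : Ordinal) : Set ↥(Lset γ)) ∈ nhds z := by
  rw [mem_nhds_subtype]
  exact ⟨Set.Ioc c (z : Ordinal), (SuccOrder.hasBasis_nhds_Ioc_of_exists_lt ⟨0, pos_iff_ne_zero.2 hz0⟩).mem_of_mem hc,
    subset_rfl⟩

/-- the underlying map between the two subspaces. -/
def Phi (hγ : Cardinal.aleph0 ≤ γ) : ↥(Iset γ) × ↥(Iset γ) → ↥(Lset γ) :=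
  fun p => ⟨F γ.ord p.1 p.2, F_mem hγ p.1.2 p.2.2⟩

theorem Phi_val (hγ : Cardinal.aleph0 ≤ γ) (p : ↥(Iset γ) × ↥(Iset γ)) :
    (Phi hγ p : Ordinal) = F γ.ord p.1 p.2 := rfl

theorem Phi_continuous (hγ : Cardinal.aleph0 ≤ γ) : Continuous (Phi hγ) := by
  rw [continuous_iff_continuousAt]
  intro p
  by_cases h1 : (p.1 : Ordinal) = γ.ord <;> by_cases h2 : (p.2 : Ordinal) = γ.ord
  · -- corner
    have hval : (Phi hγ p : Ordinal) = γ.ord * γ.ord := by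
      rw [Phi_val, h1, h2, F_corner]
    have hz0 : (Phi hγ p : Ordinal) ≠ 0 := by
      rw [hval]
      exact (lt_of_lt_of_le (og_pos hγ) (le_of_lt (g_lt_sq hγ))).ne'
    rw [ContinuousAt, Filter.tendsto_def]
    intro V hV
    obtain ⟨c, hc, hcV⟩ := mem_nhds_L hz0 hV
    rw [hval] at hc
    obtain ⟨b, hb, hbF⟩ := CL3 hγ hc
    refine Filter.mem_of_superset
      (prod_mem_nhds (Ioc_mem_nhds_I hγ h1 hb) (Ioc_mem_nhds_I hγ h2 hb)) ?_
    rintro ⟨q1, q2⟩ ⟨hq1, hq2⟩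
    obtain ⟨hlt, hle⟩ := hbF q1 q2 q1.2 q2.2 hq1.1 hq2.1
    exact hcV _ hlt (by rw [hval]; exact hle)
  · -- row limit point (γ.ord, v)
    have hvg : (p.2 : Ordinal) < γ.ord := lt_of_le_of_ne (mem_I_le p.2.2) h2
    have hval : (Phi hγ p : Ordinal) = F γ.ord γ.ord p.2 := by rw [Phi_val, h1]
    have hz0 : (Phi hγ p : Ordinal) ≠ 0 := by
      rw [hval, F_top_left hγ hvg]
      exact (lt_of_lt_of_le (og_pos hγ) (le_add_self)).ne'
    rw [ContinuousAt, Filter.tendsto_def]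
    intro V hV
    obtain ⟨c, hc, hcV⟩ := mem_nhds_L hz0 hV
    rw [hval] at hc
    obtain ⟨b, hb, hbF⟩ := CL2 hγ p.2.2 hvg hc
    refine Filter.mem_of_superset
      (prod_mem_nhds (Ioc_mem_nhds_I hγ h1 hb)
        ((isolated_I hγ p.2 h2).mem_nhds rfl)) ?_
    rintro ⟨q1, q2⟩ ⟨hq1, hq2⟩
    have hq2' : q2 = p.2 := hq2
    obtain ⟨hlt, hle⟩ := hbF q1 q1.2 hq1.1
    refine hcV _ ?_ ?_
    · rw [Phi_val]
      rw [hq2']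
      exact hlt
    · rw [Phi_val, hq2', hval]
      exact hle
  · -- column limit point (u, γ.ord)
    have hug : (p.1 : Ordinal) < γ.ord := lt_of_le_of_ne (mem_I_le p.1.2) h1
    have hval : (Phi hγ p : Ordinal) = F γ.ord p.1 γ.ord := by rw [Phi_val, h2]
    have hz0 : (Phi hγ p : Ordinal) ≠ 0 := by
      rw [hval]
      exact (F_top_right_pos hγ p.1.2 hug).ne'
    rw [ContinuousAt, Filter.tendsto_def]
    intro V hV
    obtain ⟨c, hc, hcV⟩ := mem_nhds_L hz0 hV
    rw [hval] at hc
    obtain ⟨b, hb, hbF⟩ := CL1 hγ p.1.2 hug hc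
    refine Filter.mem_of_superset
      (prod_mem_nhds ((isolated_I hγ p.1 h1).mem_nhds rfl)
        (Ioc_mem_nhds_I hγ h2 hb)) ?_
    rintro ⟨q1, q2⟩ ⟨hq1, hq2⟩
    have hq1' : q1 = p.1 := hq1
    obtain ⟨hlt, hle⟩ := hbF q2 q2.2 hq2.1
    refine hcV _ ?_ ?_
    · rw [Phi_val, hq1']
      exact hlt
    · rw [Phi_val, hq1', hval]
      exact hle
  · -- isolated point
    have hopen : IsOpen ({p} : Set (↥(Iset γ) × ↥(Iset γ))) := by
      have heq : ({p} : Set (↥(Iset γ) × ↥(Iset γ))) = {p.1} ×ˢ {p.2} := by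
        rw [Set.singleton_prod_singleton]
      rw [heq]
      exact (isolated_I hγ p.1 h1).prod (isolated_I hγ p.2 h2)
    rw [ContinuousAt, (isOpen_singleton_iff_nhds_eq_pure p).1 hopen]
    exact tendsto_pure_nhds _ _

theorem Phi_open (hγ : Cardinal.aleph0 ≤ γ) : IsOpenMap (Phi hγ) := by
  intro U hU
  rw [isOpen_iff_mem_nhds]
  rintro w ⟨p, hpU, rfl⟩
  by_cases h1 : (p.1 : Ordinal) = γ.ord <;> by_cases h2 : (p.2 : Ordinal) = γ.ord
  · -- corner
    obtain ⟨U₁, U₂, hU₁, hU₂, hp1, hp2, hsub⟩ := isOpen_prod_iff.1 hU p.1 p.2 hpU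
    obtain ⟨b₁, hb₁, hbU₁⟩ := mem_nhds_top_I hγ h1 (hU₁.mem_nhds hp1)
    obtain ⟨b₂, hb₂, hbU₂⟩ := mem_nhds_top_I hγ h2 (hU₂.mem_nhds hp2)
    obtain ⟨c, hc, hcz⟩ := OL3 hγ (max_lt hb₁ hb₂)
    have hval : (Phi hγ p : Ordinal) = γ.ord * γ.ord := by
      rw [Phi_val, h1, h2, F_corner]
    have hz0 : (Phi hγ p : Ordinal) ≠ 0 := by
      rw [hval]
      exact (lt_of_lt_of_le (og_pos hγ) (le_of_lt (g_lt_sq hγ))).ne'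
    refine Filter.mem_of_superset (Ioc_mem_nhds_L hz0 (by rw [hval]; exact hc)) ?_
    rintro w' ⟨hcw, hwle⟩
    obtain ⟨x, y, hx, hy, hbx, hby, hF⟩ := hcz w' w'.2 hcw
    refine ⟨(⟨x, hx⟩, ⟨y, hy⟩), hsub ⟨?_, ?_⟩, Subtype.ext hF⟩
    · exact hbU₁ _ (lt_of_le_of_lt (le_max_left b₁ b₂) hbx)
    · exact hbU₂ _ (lt_of_le_of_lt (le_max_right b₁ b₂) hby)
  · -- row limit point
    have hvg : (p.2 : Ordinal) < γ.ord := lt_of_le_of_ne (mem_I_le p.2.2) h2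
    obtain ⟨U₁, U₂, hU₁, hU₂, hp1, hp2, hsub⟩ := isOpen_prod_iff.1 hU p.1 p.2 hpU
    obtain ⟨b, hb, hbU₁⟩ := mem_nhds_top_I hγ h1 (hU₁.mem_nhds hp1)
    obtain ⟨c, hc, hcz⟩ := OL2 hγ p.2.2 hvg hb
    have hval : (Phi hγ p : Ordinal) = F γ.ord γ.ord p.2 := by rw [Phi_val, h1]
    have hz0 : (Phi hγ p : Ordinal) ≠ 0 := by
      rw [hval, F_top_left hγ hvg]
      exact (lt_of_lt_of_le (og_pos hγ) (le_add_self)).ne'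
    refine Filter.mem_of_superset (Ioc_mem_nhds_L hz0 (by rw [hval]; exact hc)) ?_
    rintro w' ⟨hcw, hwle⟩
    obtain ⟨x, hx, hbx, hF⟩ := hcz w' w'.2 hcw (by rw [← hval]; exact hwle)
    refine ⟨(⟨x, hx⟩, p.2), hsub ⟨hbU₁ _ hbx, hp2⟩, Subtype.ext hF⟩
  · -- column limit point
    have hug : (p.1 : Ordinal) < γ.ord := lt_of_le_of_ne (mem_I_le p.1.2) h1
    obtain ⟨U₁, U₂, hU₁, hU₂, hp1, hp2, hsub⟩ := isOpen_prod_iff.1 hU p.1 p.2 hpU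
    obtain ⟨b, hb, hbU₂⟩ := mem_nhds_top_I hγ h2 (hU₂.mem_nhds hp2)
    obtain ⟨c, hc, hcz⟩ := OL1 hγ p.1.2 hug hb
    have hval : (Phi hγ p : Ordinal) = F γ.ord p.1 γ.ord := by rw [Phi_val, h2]
    have hz0 : (Phi hγ p : Ordinal) ≠ 0 := by
      rw [hval]
      exact (F_top_right_pos hγ p.1.2 hug).ne'
    refine Filter.mem_of_superset (Ioc_mem_nhds_L hz0 (by rw [hval]; exact hc)) ?_
    rintro w' ⟨hcw, hwle⟩
    obtain ⟨y, hy, hby, hF⟩ := hcz w' w'.2 hcw (by rw [← hval]; exact hwle)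
    refine ⟨(p.1, ⟨y, hy⟩), hsub ⟨hp1, hbU₂ _ hby⟩, Subtype.ext hF⟩
  · -- isolated point
    have hiso := F_isolated_form hγ p.1.2 p.2.2 h1 h2
    refine Filter.mem_of_superset ((isolated_L (Phi hγ p) hiso).mem_nhds rfl) ?_
    rintro w' rfl
    exact ⟨p, hpU, rfl⟩

theorem Phi_bijective (hγ : Cardinal.aleph0 ≤ γ) : Function.Bijective (Phi hγ) := by
  constructor
  · rintro ⟨u1, u2⟩ ⟨v1, v2⟩ h
    have h' : F γ.ord u1 u2 = F γ.ord v1 v2 := Subtype.ext_iff.1 h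
    obtain ⟨e1, e2⟩ := F_inj hγ u1.2 u2.2 v1.2 v2.2 h'
    exact Prod.ext (Subtype.ext e1) (Subtype.ext e2)
  · rintro ⟨z, hz⟩
    obtain ⟨x, y, hx, hy, hF⟩ := F_surj hγ hz
    exact ⟨(⟨x, hx⟩, ⟨y, hy⟩), Subtype.ext hF⟩

end Top

end Stmt12Aux

/-- For every infinite cardinal `γ`, the product `I_γ × I_γ` (product of subspace
topologies) is homeomorphic to `L_γ`. -/
theorem stmt_12 (γ : Cardinal) (hγ : Cardinal.aleph0 ≤ γ) :
    Nonempty ((↥(Iset γ) × ↥(Iset γ)) ≃ₜ ↥(Lset γ)) := by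
  exact ⟨Equiv.toHomeomorphOfContinuousOpen
    (Equiv.ofBijective _ (Stmt12Aux.Phi_bijective hγ))
    (Stmt12Aux.Phi_continuous hγ) (Stmt12Aux.Phi_open hγ)⟩
end
end

section
/- Let γ be an infinite cardinal and let I_γ = {α ≤ γ : α = 0, or α is a successor ordinal, or α = γ}, with the subspace topology from the order topology on the ordinals. Then for every ordinal α < γ, the subspace {β ∈ I_γ : α ≤ β} = [α, γ] ∩ I_γ is homeomorphic to I_γ. -/
open Ordinal Set Order Filter Topology

private lemma isOpen_sing {x : Ordinal} (hx : x = 0 ∨ ∃ w, x = w + 1) :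
    IsOpen ({x} : Set Ordinal) := by
  rcases hx with rfl | ⟨w, rfl⟩
  · have h : ({0} : Set Ordinal) = Iio 1 := by
      ext y; simp [Ordinal.lt_one_iff_zero]
    rw [h]; exact isOpen_Iio
  · have h : ({w + 1} : Set Ordinal) = Ioo w (w + 1 + 1) := by
      ext y
      simp only [mem_singleton_iff, mem_Ioo]
      constructor
      · rintro rfl
        rw [add_one_eq_succ, add_one_eq_succ]
        exact ⟨lt_succ w, lt_succ _⟩
      · rintro ⟨h1, h2⟩
        rw [add_one_eq_succ, add_one_eq_succ] at *
        exact le_antisymm (Order.lt_succ_iff.mp h2) (Order.succ_le_iff.mpr h1)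
    rw [h]; exact isOpen_Ioo

private lemma contAux {S T : Set Ordinal} {top : Ordinal} (htop0 : 0 < top)
    (htopS : top ∈ S) (htopT : top ∈ T)
    (hSle : ∀ x ∈ S, x ≤ top) (hTle : ∀ x ∈ T, x ≤ top)
    (hSiso : ∀ x ∈ S, x ≠ top → IsOpen ({x} : Set Ordinal))
    (hTcof : ∀ b < top, ∃ t, t ∈ T ∧ b < t ∧ t < top)
    (e : ↥S ≃o ↥T) : Continuous (e : ↥S → ↥T) := by
  have etop : e ⟨top, htopS⟩ = ⟨top, htopT⟩ := by
    apply le_antisymm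
    · exact Subtype.coe_le_coe.mp (hTle _ (e ⟨top, htopS⟩).2)
    · have h1 : e.symm ⟨top, htopT⟩ ≤ ⟨top, htopS⟩ :=
        Subtype.coe_le_coe.mp (hSle _ (e.symm ⟨top, htopT⟩).2)
      have h2 := e.monotone h1
      rwa [OrderIso.apply_symm_apply] at h2
  rw [continuous_iff_continuousAt]
  rintro ⟨v, hv⟩
  by_cases hvt : v = top
  · subst hvt
    intro s hs
    rw [etop] at hs
    rw [nhds_subtype_eq_comap] at hs
    obtain ⟨U, hU, hUs⟩ := hs
    obtain ⟨b, hb, hIoc⟩ := exists_Ioc_subset_of_mem_nhds hU ⟨0, htop0⟩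
    obtain ⟨t, htT, hbt, httop⟩ := hTcof b hb
    have hst : (e.symm ⟨t, htT⟩ : Ordinal) < v := by
      rcases lt_or_eq_of_le (hSle _ (e.symm ⟨t, htT⟩).2) with h | h
      · exact h
      · exfalso
        have h3 : e.symm ⟨t, htT⟩ = ⟨v, htopS⟩ := Subtype.ext h
        have h4 := congrArg e h3
        rw [OrderIso.apply_symm_apply, etop] at h4
        exact httop.ne (congrArg Subtype.val h4)
    have hopen : IsOpen ((Subtype.val) ⁻¹' (Ioi (e.symm ⟨t, htT⟩ : Ordinal)) : Set ↥S) :=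
      isOpen_Ioi.preimage continuous_subtype_val
    rw [mem_map]
    apply Filter.mem_of_superset (hopen.mem_nhds hst)
    rintro ⟨x, hxS⟩ hx
    apply hUs
    apply hIoc
    constructor
    · have h2 : e.symm ⟨t, htT⟩ < ⟨x, hxS⟩ := Subtype.coe_lt_coe.mp hx
      have h5 : (⟨t, htT⟩ : ↥T) < e ⟨x, hxS⟩ := by
        calc (⟨t, htT⟩ : ↥T) = e (e.symm ⟨t, htT⟩) := (e.apply_symm_apply _).symm
        _ < e ⟨x, hxS⟩ := e.strictMono h2
      exact hbt.trans (Subtype.coe_lt_coe.mpr h5)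
    · exact hTle _ (e _).2
  · have hne : 𝓝 (⟨v, hv⟩ : ↥S) = pure ⟨v, hv⟩ := by
      rw [← isOpen_singleton_iff_nhds_eq_pure]
      have hset : ({⟨v, hv⟩} : Set ↥S) = Subtype.val ⁻¹' {v} := by
        ext y; simp [Subtype.ext_iff]
      rw [hset]
      exact (hSiso v hv hvt).preimage continuous_subtype_val
    unfold ContinuousAt
    rw [hne]
    exact tendsto_pure_nhds _ _

private lemma mainAux (γ : Cardinal) (hγ : Cardinal.aleph0 ≤ γ) (α α' : Ordinal)
    (hα' : α' < γ.ord) (hα0 : α ≠ 0) (hkey : ∀ w : Ordinal, α ≤ w + 1 ↔ α' ≤ w) :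
    Nonempty (↥{β ∈ Iset γ | α ≤ β} ≃ₜ ↥(Iset γ)) := by
  set κ := γ.ord with hκdef
  have hκlim : IsSuccLimit κ := Cardinal.isSuccLimit_ord hγ
  have hωκ : Ordinal.omega0 ≤ κ := Cardinal.omega0_le_ord.mpr hγ
  have hpr : ∀ {a b : Ordinal}, a < κ → b < κ → a + b < κ :=
    fun ha hb => Ordinal.isPrincipal_add_ord hγ ha hb
  have hsucclt : ∀ {a : Ordinal}, a < κ → a + 1 < κ := fun {a} ha => by
    rw [add_one_eq_succ]; exact hκlim.succ_lt ha
  have hlts : ∀ a : Ordinal, a < a + 1 := fun a => by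
    rw [add_one_eq_succ]; exact lt_succ a
  set T : Set Ordinal := {β ∈ Iset γ | α ≤ β} with hTdef
  have hκS : κ ∈ Iset γ := ⟨le_rfl, Or.inr (Or.inr rfl)⟩
  have hακ : α < κ := lt_of_le_of_lt ((hkey α').mpr le_rfl) (hsucclt hα')
  have hκT : κ ∈ T := ⟨hκS, hακ.le⟩
  -- membership of successors in T
  have hTmem : ∀ ξ : Ordinal, ξ < κ → (α' + ξ + 1 ∈ T ∧ α' + ξ + 1 < κ) := by
    intro ξ hξ
    have hlt : α' + ξ + 1 < κ := hsucclt (hpr hα' hξ)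
    exact ⟨⟨⟨hlt.le, Or.inr (Or.inl ⟨_, rfl⟩)⟩, (hkey _).mpr (le_self_add)⟩, hlt⟩
  -- every non-top element of T is of the form α' + ξ + 1
  have hTelim : ∀ x, x ∈ T → x ≠ κ → ∃ ξ, ξ < κ ∧ x = α' + ξ + 1 := by
    rintro x ⟨⟨hxle, h0 | ⟨w, rfl⟩ | h3⟩, hαx⟩ hxκ
    · subst h0; exact absurd (nonpos_iff_eq_zero.mp hαx) hα0
    · have hw : α' ≤ w := (hkey w).mp hαx
      have hwκ : w < κ := lt_of_lt_of_le (hlts w) hxle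
      refine ⟨w - α', lt_of_le_of_lt (Ordinal.sub_le_self w α') hwκ, ?_⟩
      rw [Ordinal.add_sub_cancel_of_le hw]
    · exact absurd h3 hxκ
  -- index functions
  set idx : Ordinal → Ordinal :=
    fun v => if v < Ordinal.omega0 then v else Ordinal.pred v with hidx
  set val : Ordinal → Ordinal :=
    fun ξ => if ξ < Ordinal.omega0 then ξ else ξ + 1 with hval
  have hvi : ∀ ξ, idx (val ξ) = ξ := by
    intro ξ
    by_cases h : ξ < Ordinal.omega0
    · simp [hval, hidx, h]
    · have h2 : ¬(succ ξ < Ordinal.omega0) := fun hc => h ((lt_succ ξ).trans hc)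
      simp only [hval, hidx, if_neg h]
      rw [add_one_eq_succ, if_neg h2, Ordinal.pred_succ]
  have hiv : ∀ v, (v = 0 ∨ ∃ w, v = w + 1) → val (idx v) = v := by
    intro v hv
    by_cases h : v < Ordinal.omega0
    · simp [hval, hidx, h]
    · obtain ⟨w, rfl⟩ := hv.resolve_left (by rintro rfl; exact h omega0_pos)
      have h' : ¬(succ w < Ordinal.omega0) := by rwa [add_one_eq_succ] at h
      have hw : ¬(w < Ordinal.omega0) := fun hc => h' (isSuccLimit_omega0.succ_lt hc)
      simp only [hidx, hval]
      rw [add_one_eq_succ, if_neg h', Ordinal.pred_succ, if_neg hw]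
      exact add_one_eq_succ w
  have hidxle : ∀ v, idx v ≤ v := by
    intro v
    by_cases h : v < Ordinal.omega0
    · simp [hidx, h]
    · simp only [hidx, if_neg h]; exact pred_le_self v
  have hvalmono : ∀ ξ1 ξ2 : Ordinal, ξ1 < ξ2 → val ξ1 < val ξ2 := by
    intro ξ1 ξ2 h12
    by_cases h1 : ξ1 < Ordinal.omega0 <;> by_cases h2 : ξ2 < Ordinal.omega0
    · simpa [hval, h1, h2] using h12
    · simp only [hval, if_pos h1, if_neg h2]
      exact h12.trans (hlts ξ2)
    · exact absurd (h12.trans h2) h1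
    · simp only [hval, if_neg h1, if_neg h2]
      rw [add_one_eq_succ, add_one_eq_succ]
      exact succ_lt_succ h12
  have hidxmono : ∀ v1 v2, (v1 = 0 ∨ ∃ w, v1 = w + 1) → (v2 = 0 ∨ ∃ w, v2 = w + 1) →
      v1 < v2 → idx v1 < idx v2 := by
    intro v1 v2 h1 h2 h12
    by_contra hc
    rcases eq_or_lt_of_le (not_lt.mp hc) with h | h
    · rw [← hiv v1 h1, ← hiv v2 h2, h] at h12
      exact lt_irrefl _ h12
    · have := hvalmono _ _ h
      rw [hiv v1 h1, hiv v2 h2] at this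
      exact lt_asymm h12 this
  have hvalmem : ∀ ξ, ξ < κ → (val ξ ∈ Iset γ ∧ val ξ < κ ∧
      (val ξ = 0 ∨ ∃ w, val ξ = w + 1)) := by
    intro ξ hξ
    by_cases h : ξ < Ordinal.omega0
    · have hform : ξ = 0 ∨ ∃ w, ξ = w + 1 := by
        obtain ⟨n, rfl⟩ := Ordinal.lt_omega0.mp h
        cases n with
        | zero => exact Or.inl (by simp)
        | succ m => exact Or.inr ⟨m, by push_cast; ring_nf⟩
      have hvξ : val ξ = ξ := by simp [hval, h]
      rw [hvξ]
      refine ⟨⟨hξ.le, ?_⟩, hξ, hform⟩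
      rcases hform with h0 | hs
      exacts [Or.inl h0, Or.inr (Or.inl hs)]
    · have hlt : val ξ < κ := by
        simp only [hval, if_neg h]; exact hsucclt hξ
      refine ⟨⟨hlt.le, Or.inr (Or.inl ⟨ξ, ?_⟩)⟩, hlt, Or.inr ⟨ξ, ?_⟩⟩ <;>
        simp [hval, if_neg h]
  -- the forward and backward maps
  set F0 : Ordinal → Ordinal := fun v => if v = κ then κ else α' + idx v + 1 with hF0
  set G0 : Ordinal → Ordinal := fun x => if x = κ then κ else val (Ordinal.pred x - α') with hG0
  have hSelim : ∀ v, v ∈ Iset γ → v ≠ κ → v < κ ∧ (v = 0 ∨ ∃ w, v = w + 1) := by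
    rintro v ⟨hvle, hv⟩ hvκ
    refine ⟨lt_of_le_of_ne hvle hvκ, ?_⟩
    rcases hv with h | h | h
    exacts [Or.inl h, Or.inr h, absurd h hvκ]
  have hF0mem : ∀ v ∈ Iset γ, F0 v ∈ T ∧ (v ≠ κ → F0 v < κ) := by
    intro v hv
    by_cases h : v = κ
    · simp only [hF0, if_pos h]
      exact ⟨hκT, fun hc => absurd h hc⟩
    · obtain ⟨hvκ, hvform⟩ := hSelim v hv h
      have hidxκ : idx v < κ := lt_of_le_of_lt (hidxle v) hvκ
      simp only [hF0, if_neg h]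
      exact ⟨(hTmem _ hidxκ).1, fun _ => (hTmem _ hidxκ).2⟩
  have hG0mem : ∀ x ∈ T, G0 x ∈ Iset γ := by
    intro x hx
    by_cases h : x = κ
    · simp only [hG0, if_pos h]; exact hκS
    · obtain ⟨ξ, hξ, rfl⟩ := hTelim x hx h
      simp only [hG0, if_neg h]
      rw [add_one_eq_succ, Ordinal.pred_succ, Ordinal.add_sub_cancel]
      exact (hvalmem ξ hξ).1
  have hGF : ∀ v ∈ Iset γ, G0 (F0 v) = v := by
    intro v hv
    by_cases h : v = κ
    · simp [hF0, hG0, h]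
    · obtain ⟨hvκ, hvform⟩ := hSelim v hv h
      have hidxκ : idx v < κ := lt_of_le_of_lt (hidxle v) hvκ
      have hne : α' + idx v + 1 ≠ κ := (hTmem _ hidxκ).2.ne
      simp only [hF0, hG0, if_neg h, if_neg hne]
      rw [add_one_eq_succ, Ordinal.pred_succ, Ordinal.add_sub_cancel]
      exact hiv v hvform
  have hFG : ∀ x ∈ T, F0 (G0 x) = x := by
    intro x hx
    by_cases h : x = κ
    · simp [hF0, hG0, h]
    · obtain ⟨ξ, hξ, rfl⟩ := hTelim x hx h
      have h1 : G0 (α' + ξ + 1) = val ξ := by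
        simp only [hG0, if_neg h]
        rw [add_one_eq_succ, Ordinal.pred_succ, Ordinal.add_sub_cancel]
      rw [h1]
      have h2 : val ξ ≠ κ := (hvalmem ξ hξ).2.1.ne
      simp only [hF0, if_neg h2, hvi ξ]
  have hFmono : ∀ v1 ∈ Iset γ, ∀ v2 ∈ Iset γ, v1 < v2 → F0 v1 < F0 v2 := by
    intro v1 hv1 v2 hv2 h12
    by_cases h2 : v2 = κ
    · have h1 : v1 ≠ κ := by rintro rfl; exact lt_irrefl _ (h2 ▸ h12)
      obtain ⟨hv1κ, hv1form⟩ := hSelim v1 hv1 h1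
      have := (hF0mem v1 hv1).2 h1
      simp only [hF0, if_pos h2] at *
      exact this
    · have h1 : v1 ≠ κ := by
        intro hc; subst hc
        exact absurd (lt_of_lt_of_le h12 (hv2.1)) (lt_irrefl _)
      obtain ⟨hv1κ, hv1form⟩ := hSelim v1 hv1 h1
      obtain ⟨hv2κ, hv2form⟩ := hSelim v2 hv2 h2
      have hidx12 : idx v1 < idx v2 := hidxmono v1 v2 hv1form hv2form h12
      simp only [hF0, if_neg h1, if_neg h2]
      rw [add_one_eq_succ, add_one_eq_succ]
      exact succ_lt_succ ((add_lt_add_iff_left α').2 hidx12)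
  -- bundle into an order isomorphism
  have hFmem : ∀ v : ↥(Iset γ), F0 v ∈ T := fun v => (hF0mem v v.2).1
  have hGmem : ∀ x : ↥T, G0 x ∈ Iset γ := fun x => hG0mem x x.2
  set Fm : ↥(Iset γ) → ↥T := fun v => ⟨F0 v, hFmem v⟩ with hFm
  have hsm : StrictMono Fm := by
    intro a b hab
    exact Subtype.coe_lt_coe.mp (hFmono a a.2 b b.2 (Subtype.coe_lt_coe.mpr hab))
  set E : ↥(Iset γ) ≃o ↥T :=
    { toFun := Fm
      invFun := fun x => ⟨G0 x, hGmem x⟩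
      left_inv := fun v => Subtype.ext (hGF v v.2)
      right_inv := fun x => Subtype.ext (hFG x x.2)
      map_rel_iff' := by
        intro a b
        exact hsm.le_iff_le } with hE
  -- topological hypotheses
  have hSle : ∀ x ∈ Iset γ, x ≤ κ := fun x hx => hx.1
  have hTle : ∀ x ∈ T, x ≤ κ := fun x hx => hx.1.1
  have hSiso : ∀ x ∈ Iset γ, x ≠ κ → IsOpen ({x} : Set Ordinal) :=
    fun x hx hxκ => isOpen_sing (hSelim x hx hxκ).2
  have hTiso : ∀ x ∈ T, x ≠ κ → IsOpen ({x} : Set Ordinal) :=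
    fun x hx hxκ => isOpen_sing (hSelim x hx.1 hxκ).2
  have hScof : ∀ b < κ, ∃ t, t ∈ Iset γ ∧ b < t ∧ t < κ := by
    intro b hb
    exact ⟨b + 1, ⟨(hsucclt hb).le, Or.inr (Or.inl ⟨b, rfl⟩)⟩, hlts b, hsucclt hb⟩
  have hTcof : ∀ b < κ, ∃ t, t ∈ T ∧ b < t ∧ t < κ := by
    intro b hb
    have hm : max b α' < κ := max_lt hb hα'
    refine ⟨max b α' + 1, ⟨⟨(hsucclt hm).le, Or.inr (Or.inl ⟨_, rfl⟩)⟩,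
      (hkey _).mpr (le_max_right _ _)⟩, lt_of_le_of_lt (le_max_left _ _) (hlts _), hsucclt hm⟩
  have hcont1 : Continuous (E : ↥(Iset γ) → ↥T) :=
    contAux hκlim.pos hκS hκT hSle hTle hSiso hTcof E
  have hcont2 : Continuous (E.symm : ↥T → ↥(Iset γ)) :=
    contAux hκlim.pos hκT hκS hTle hSle hTiso hScof E.symm
  exact ⟨{ toEquiv := E.symm.toEquiv, continuous_toFun := hcont2, continuous_invFun := hcont1 }⟩

/-- For an infinite cardinal `γ` and any ordinal `α < γ`, the final segment
`[α, γ] ∩ I_γ` of `I_γ` is homeomorphic to `I_γ`. -/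
theorem stmt_16 (γ : Cardinal) (hγ : Cardinal.aleph0 ≤ γ) (α : Ordinal) (hα : α < γ.ord) :
    Nonempty (↥{β ∈ Iset γ | α ≤ β} ≃ₜ ↥(Iset γ)) := by
  rcases eq_or_ne α 0 with rfl | hα0
  · exact ⟨Homeomorph.setCongr (by ext β; simp [zero_le])⟩
  by_cases hsucc : ∃ a, α = a + 1
  · obtain ⟨a, rfl⟩ := hsucc
    have ha : a < γ.ord := lt_of_le_of_lt (by rw [Ordinal.add_one_eq_succ]; exact Order.le_succ a) hα
    exact mainAux γ hγ _ a ha hα0 (fun w => by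
      rw [Ordinal.add_one_eq_succ, Ordinal.add_one_eq_succ, Order.succ_le_succ_iff])
  · refine mainAux γ hγ α α hα hα0 (fun w => ?_)
    constructor
    · intro h
      rcases eq_or_lt_of_le h with h1 | h2
      · exact absurd ⟨w, h1⟩ hsucc
      · rw [Ordinal.add_one_eq_succ] at h2; exact Order.lt_succ_iff.mp h2
    · intro h
      exact h.trans (by rw [Ordinal.add_one_eq_succ]; exact Order.le_succ w)
end

section
/- Let X = {α : α ≤ ω} with the usual ordinal order, and let X ×ₗ X denote X × X with the lexicographic order and the order topology induced by that lexicographic order. Let Y = (X ×ₗ X) \ {⟨ω, n⟩ : 1 ≤ n < ω}, with the subspace topology from X ×ₗ X. Then Y is homeomorphic to X ×ₗ X. -/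
/-- `X = {α : α ≤ ω}` with its usual order. -/
abbrev Xomega : Type 1 := {α : Ordinal // α ≤ Ordinal.omega0}

/-- The order topology of the lexicographic order on `X ×ₗ X`. -/
noncomputable instance : TopologicalSpace (Xomega ×ₗ Xomega) :=
  Preorder.topology (Xomega ×ₗ Xomega)

/-- `Y = (X ×ₗ X) \ {⟨ω, n⟩ : 1 ≤ n < ω}`. -/
def Y19 : Set (Xomega ×ₗ Xomega) :=
  {p | ¬(((ofLex p).1 : Ordinal) = Ordinal.omega0 ∧
      1 ≤ ((ofLex p).2 : Ordinal) ∧ ((ofLex p).2 : Ordinal) < Ordinal.omega0)}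

instance : OrderTopology (Xomega ×ₗ Xomega) := ⟨rfl⟩

namespace Stmt19

open Ordinal Set

/-- the top element ω of X. -/
def xw : Xomega := ⟨Ordinal.omega0, le_rfl⟩
/-- the finite elements of X. -/
def xn (n : ℕ) : Xomega := ⟨(n : Ordinal), (Ordinal.nat_lt_omega0 n).le⟩

@[simp] lemma xn_lt_xn {n m : ℕ} : xn n < xn m ↔ n < m := by
  simp [xn, Subtype.mk_lt_mk, Nat.cast_lt]

@[simp] lemma xn_lt_xw {n : ℕ} : xn n < xw := by
  simpa [xn, xw, Subtype.mk_lt_mk] using Ordinal.nat_lt_omega0 n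

@[simp] lemma not_xw_lt (x : Xomega) : ¬ xw < x := by
  exact fun h => (not_le.mpr h) x.2

@[simp] lemma xn_inj {n m : ℕ} : xn n = xn m ↔ n = m := by
  simp [xn, Subtype.ext_iff, Nat.cast_inj]

@[simp] lemma xn_ne_xw {n : ℕ} : xn n ≠ xw := by
  simp [xn, xw, Subtype.ext_iff]; exact (Ordinal.nat_lt_omega0 n).ne

@[simp] lemma xw_ne_xn {n : ℕ} : xw ≠ xn n := fun h => xn_ne_xw h.symm

@[simp] lemma not_lt_xn0 (x : Xomega) : ¬ x < xn 0 := by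
  intro h
  exact not_lt_zero' (a := x.1) (by simpa [xn, Subtype.mk_lt_mk] using (show x.1 < ((0 : ℕ) : Ordinal) from h))

lemma Xomega.cases (x : Xomega) : (∃ n : ℕ, x = xn n) ∨ x = xw := by
  rcases lt_or_eq_of_le x.2 with h | h
  · obtain ⟨n, hn⟩ := Ordinal.lt_omega0.mp h
    exact .inl ⟨n, Subtype.ext hn⟩
  · exact .inr (Subtype.ext h)

lemma lex_cases (p : Xomega ×ₗ Xomega) : ∃ a b : Xomega, p = toLex (a, b) :=
  ⟨(ofLex p).1, (ofLex p).2, rfl⟩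

lemma tlt {a b a' b' : Xomega} :
    toLex (a, b) < toLex (a', b') ↔ a < a' ∨ (a = a' ∧ b < b') :=
  Prod.Lex.toLex_lt_toLex


/-- The forward map. -/
noncomputable def F (p : Xomega ×ₗ Xomega) : Xomega ×ₗ Xomega :=
  if (ofLex p).1 = xw then
    (if (ofLex p).2 = xn 0 then toLex (xw, xn 0) else toLex (xw, xn 1))
  else if (ofLex p).1 = xn 0 then
    (if h : (ofLex p).2 = xw then toLex (xw, xw)
     else toLex (xw, ⟨((ofLex p).2 : Ordinal) + 2,
        (Ordinal.principal_add_omega0 (lt_of_le_of_ne (ofLex p).2.2 fun hh => h (Subtype.ext hh))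
          (Ordinal.nat_lt_omega0 2)).le⟩))
  else toLex (⟨((ofLex p).1 : Ordinal) - 1, le_trans (Ordinal.sub_le_self _ _) (ofLex p).1.2⟩,
    (ofLex p).2)

/-- The inverse map. -/
noncomputable def G (p : Xomega ×ₗ Xomega) : Xomega ×ₗ Xomega :=
  if h : (ofLex p).1 = xw then
    (if (ofLex p).2 = xn 0 then toLex (xw, xn 0)
     else if (ofLex p).2 = xn 1 then toLex (xw, xw)
     else if (ofLex p).2 = xw then toLex (xn 0, xw)
     else toLex (xn 0, ⟨((ofLex p).2 : Ordinal) - 2,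
        le_trans (Ordinal.sub_le_self _ _) (ofLex p).2.2⟩))
  else toLex (⟨((ofLex p).1 : Ordinal) + 1,
      (Ordinal.principal_add_omega0 (lt_of_le_of_ne (ofLex p).1.2 fun hh => h (Subtype.ext hh))
        Ordinal.one_lt_omega0).le⟩, (ofLex p).2)

@[simp] lemma F_w0 : F (toLex (xw, xn 0)) = toLex (xw, xn 0) := by
  simp [F]

@[simp] lemma F_wb {b : Xomega} (h : b ≠ xn 0) : F (toLex (xw, b)) = toLex (xw, xn 1) := by
  simp [F, h]

@[simp] lemma F_0n (k : ℕ) : F (toLex (xn 0, xn k)) = toLex (xw, xn (k + 2)) := by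
  simp only [F, ofLex_toLex, xn_ne_xw, if_neg, if_pos, xn_inj, if_true, dif_neg,
    not_false_iff, toLex_inj]
  refine (dif_neg xn_ne_xw).trans (toLex_inj.mpr ?_)
  refine Prod.ext rfl (Subtype.ext ?_)
  show ((k : ℕ) : Ordinal) + 2 = ((k + 2 : ℕ) : Ordinal)
  push_cast
  rfl

@[simp] lemma F_0w : F (toLex (xn 0, xw)) = toLex (xw, xw) := by
  simp [F]

@[simp] lemma F_succ (n : ℕ) (b : Xomega) : F (toLex (xn (n + 1), b)) = toLex (xn n, b) := by
  have h1 : xn (n + 1) ≠ xn 0 := by simp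
  simp only [F, ofLex_toLex, xn_ne_xw, if_neg, xn_inj, h1, not_false_iff, toLex_inj]
  refine Prod.ext (Subtype.ext ?_) rfl
  show ((n + 1 : ℕ) : Ordinal) - 1 = ((n : ℕ) : Ordinal)
  rw [← Nat.cast_one (R := Ordinal), ← Ordinal.natCast_sub]
  norm_num

@[simp] lemma G_w0 : G (toLex (xw, xn 0)) = toLex (xw, xn 0) := by simp [G]

@[simp] lemma G_w1 : G (toLex (xw, xn 1)) = toLex (xw, xw) := by simp [G]

@[simp] lemma G_ww : G (toLex (xw, xw)) = toLex (xn 0, xw) := by simp [G]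

@[simp] lemma G_wn (k : ℕ) : G (toLex (xw, xn (k + 2))) = toLex (xn 0, xn k) := by
  have h1 : xn (k + 2) ≠ xn 0 := by simp
  have h2 : xn (k + 2) ≠ xn 1 := by simp
  simp only [G, ofLex_toLex, dif_pos, if_pos, xn_inj, xn_ne_xw, h1, h2, if_neg,
    not_false_iff, toLex_inj]
  refine Prod.ext rfl (Subtype.ext ?_)
  show ((k + 2 : ℕ) : Ordinal) - 2 = ((k : ℕ) : Ordinal)
  rw [show (2 : Ordinal) = ((2 : ℕ) : Ordinal) by norm_num, ← Ordinal.natCast_sub]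
  norm_num

@[simp] lemma G_nat (n : ℕ) (b : Xomega) : G (toLex (xn n, b)) = toLex (xn (n + 1), b) := by
  simp only [G, ofLex_toLex, xn_ne_xw, dif_neg, not_false_iff, toLex_inj]
  refine (dif_neg xn_ne_xw).trans (toLex_inj.mpr ?_)
  refine Prod.ext (Subtype.ext ?_) rfl
  show ((n : ℕ) : Ordinal) + 1 = ((n + 1 : ℕ) : Ordinal)
  push_cast
  rfl

@[simp] lemma memY_nat (n : ℕ) (b : Xomega) : toLex (xn n, b) ∈ Y19 := by
  simp only [Y19, Set.mem_setOf_eq, ofLex_toLex, not_and]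
  intro h
  exact absurd h (Ordinal.nat_lt_omega0 n).ne

@[simp] lemma memY_w0 : toLex (xw, xn 0) ∈ Y19 := by
  simp [Y19, xn, xw]

@[simp] lemma memY_ww : toLex (xw, xw) ∈ Y19 := by
  simp [Y19, xw]

@[simp] lemma not_memY (k : ℕ) : toLex (xw, xn (k + 1)) ∉ Y19 := by
  simp only [Y19, Set.mem_setOf_eq, ofLex_toLex, not_not]
  refine ⟨rfl, ?_, Ordinal.nat_lt_omega0 _⟩
  show (1 : Ordinal) ≤ ((k + 1 : ℕ) : Ordinal)
  rw [← Nat.cast_one (R := Ordinal), Nat.cast_le]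
  omega

lemma G_mem (p : Xomega ×ₗ Xomega) : G p ∈ Y19 := by
  obtain ⟨a, b, rfl⟩ := lex_cases p
  rcases Xomega.cases a with ⟨n, rfl⟩ | rfl
  · simp
  · rcases Xomega.cases b with ⟨k, rfl⟩ | rfl
    · match k with
      | 0 => simp
      | 1 => simp
      | (k + 2) => simp
    · simp

/-- the bijection. -/
noncomputable def e : Y19 ≃ (Xomega ×ₗ Xomega) where
  toFun y := F y.1
  invFun p := ⟨G p, G_mem p⟩
  left_inv := by
    rintro ⟨p, hp⟩
    obtain ⟨a, b, rfl⟩ := lex_cases p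
    refine Subtype.ext ?_
    rcases Xomega.cases a with ⟨n, rfl⟩ | rfl
    · match n with
      | 0 =>
        rcases Xomega.cases b with ⟨k, rfl⟩ | rfl <;> simp
      | (n + 1) => simp
    · rcases Xomega.cases b with ⟨k, rfl⟩ | rfl
      · match k with
        | 0 => simp
        | (k + 1) => exact absurd hp (not_memY k)
      · simp
  right_inv := by
    intro p
    obtain ⟨a, b, rfl⟩ := lex_cases p
    rcases Xomega.cases a with ⟨n, rfl⟩ | rfl
    · match n with
      | 0 => rcases Xomega.cases b with ⟨k, rfl⟩ | rfl <;> simp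
      | (n + 1) => simp
    · rcases Xomega.cases b with ⟨k, rfl⟩ | rfl
      · match k with
        | 0 => simp
        | 1 => simp
        | (k + 2) => simp
      · simp

open Set

lemma forallY (P : (Xomega ×ₗ Xomega) → Prop)
    (h1 : ∀ k, P (toLex (xn 0, xn k)))
    (h2 : P (toLex (xn 0, xw)))
    (h3 : ∀ n b, P (toLex (xn (n + 1), b)))
    (h4 : P (toLex (xw, xn 0)))
    (h5 : P (toLex (xw, xw))) : ∀ p ∈ Y19, P p := by
  intro p hp
  obtain ⟨a, b, rfl⟩ := lex_cases p
  rcases Xomega.cases a with ⟨n, rfl⟩ | rfl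
  · match n with
    | 0 =>
      rcases Xomega.cases b with ⟨k, rfl⟩ | rfl
      · exact h1 k
      · exact h2
    | (n + 1) => exact h3 n b
  · rcases Xomega.cases b with ⟨k, rfl⟩ | rfl
    · match k with
      | 0 => exact h4
      | (k + 1) => exact absurd hp (not_memY k)
    · exact h5

lemma forallAll (P : (Xomega ×ₗ Xomega) → Prop)
    (h1 : ∀ n b, P (toLex (xn n, b)))
    (h2 : P (toLex (xw, xn 0)))
    (h3 : P (toLex (xw, xn 1)))
    (h4 : ∀ k, P (toLex (xw, xn (k + 2))))
    (h5 : P (toLex (xw, xw))) : ∀ p, P p := by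
  intro p
  obtain ⟨a, b, rfl⟩ := lex_cases p
  rcases Xomega.cases a with ⟨n, rfl⟩ | rfl
  · exact h1 n b
  · rcases Xomega.cases b with ⟨k, rfl⟩ | rfl
    · match k with
      | 0 => exact h2
      | 1 => exact h3
      | (k + 2) => exact h4 k
    · exact h5

lemma open_preF {s U : Set (Xomega ×ₗ Xomega)} (hU : IsOpen U)
    (h : ∀ p ∈ Y19, (F p ∈ s ↔ p ∈ U)) :
    IsOpen ((fun y : Y19 => F y.1) ⁻¹' s) := by
  have he : (fun y : Y19 => F y.1) ⁻¹' s = Subtype.val ⁻¹' U := by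
    ext ⟨p, hp⟩
    exact h p hp
  rw [he]
  exact hU.preimage continuous_subtype_val

lemma open_preG {s U : Set (Xomega ×ₗ Xomega)} (hU : IsOpen U)
    (h : ∀ p, G p ∈ s ↔ p ∈ U) : IsOpen (G ⁻¹' s) := by
  have he : G ⁻¹' s = U := Set.ext h
  rwa [he]

lemma hF : Continuous fun y : Y19 => F y.1 := by
  refine continuous_generateFrom_iff.mpr ?_
  rintro s ⟨c, rfl | rfl⟩ <;> obtain ⟨c1, c2, rfl⟩ := lex_cases c
  · -- s = Ioi c
    rcases Xomega.cases c1 with ⟨m, rfl⟩ | rfl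
    · refine open_preF (U := Iio (toLex (xn 1, xn 0)) ∪ Ioi (toLex (xn (m + 1), c2)))
        (isOpen_Iio.union isOpen_Ioi) ?_
      refine forallY _ ?_ ?_ ?_ ?_ ?_ <;>
        simp +contextual [tlt, Nat.add_lt_add_iff_right, Nat.add_right_cancel_iff] <;>
        try tauto
    · rcases Xomega.cases c2 with ⟨j, rfl⟩ | rfl
      · match j with
        | 0 =>
          refine open_preF (U := Iio (toLex (xn 1, xn 0)) ∪ Ioi (toLex (xw, xn 0)))
            (isOpen_Iio.union isOpen_Ioi) ?_
          refine forallY _ ?_ ?_ ?_ ?_ ?_ <;>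
            simp +contextual [tlt, Nat.add_lt_add_iff_right, Nat.add_right_cancel_iff] <;>
            try tauto
        | 1 =>
          refine open_preF (U := Iio (toLex (xn 1, xn 0))) isOpen_Iio ?_
          refine forallY _ ?_ ?_ ?_ ?_ ?_ <;>
            simp +contextual [tlt, Nat.add_lt_add_iff_right, Nat.add_right_cancel_iff] <;>
            try tauto
        | (j + 2) =>
          refine open_preF (U := Ioo (toLex (xn 0, xn j)) (toLex (xn 1, xn 0))) isOpen_Ioo ?_
          refine forallY _ ?_ ?_ ?_ ?_ ?_ <;>
            simp +contextual [tlt, Nat.add_lt_add_iff_right, Nat.add_right_cancel_iff] <;>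
            first
            | omega
            | try tauto
      · refine open_preF (U := (∅ : Set (Xomega ×ₗ Xomega))) isOpen_empty ?_
        refine forallY _ ?_ ?_ ?_ ?_ ?_ <;>
          simp +contextual [tlt, Nat.add_lt_add_iff_right, Nat.add_right_cancel_iff]
  · -- s = Iio c
    rcases Xomega.cases c1 with ⟨m, rfl⟩ | rfl
    · refine open_preF (U := Ioo (toLex (xn 0, xw)) (toLex (xn (m + 1), c2))) isOpen_Ioo ?_
      refine forallY _ ?_ ?_ ?_ ?_ ?_ <;>
        simp +contextual [tlt, Nat.add_lt_add_iff_right, Nat.add_right_cancel_iff] <;>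
        try tauto
    · rcases Xomega.cases c2 with ⟨j, rfl⟩ | rfl
      · match j with
        | 0 =>
          refine open_preF (U := Ioo (toLex (xn 0, xw)) (toLex (xw, xn 0))) isOpen_Ioo ?_
          refine forallY _ ?_ ?_ ?_ ?_ ?_ <;>
            simp +contextual [tlt, Nat.add_lt_add_iff_right, Nat.add_right_cancel_iff] <;>
            try tauto
        | 1 =>
          refine open_preF (U := Ioo (toLex (xn 0, xw)) (toLex (xw, xn 1))) isOpen_Ioo ?_
          refine forallY _ ?_ ?_ ?_ ?_ ?_ <;>
            simp +contextual [tlt, Nat.add_lt_add_iff_right, Nat.add_right_cancel_iff] <;>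
            try tauto
        | (j + 2) =>
          refine open_preF
            (U := Iio (toLex (xn 0, xn j)) ∪ Ioo (toLex (xn 0, xw)) (toLex (xw, xn 1)) ∪
              Ioi (toLex (xw, xn 0)))
            ((isOpen_Iio.union isOpen_Ioo).union isOpen_Ioi) ?_
          refine forallY _ ?_ ?_ ?_ ?_ ?_ <;>
            simp +contextual [tlt, Nat.add_lt_add_iff_right, Nat.add_right_cancel_iff] <;>
            first
            | omega
            | try tauto
      · refine open_preF (U := Iio (toLex (xn 0, xw)) ∪ Ioi (toLex (xn 0, xw)))
          (isOpen_Iio.union isOpen_Ioi) ?_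
        refine forallY _ ?_ ?_ ?_ ?_ ?_ <;>
          simp +contextual [tlt, Nat.add_lt_add_iff_right, Nat.add_right_cancel_iff] <;>
          try tauto

lemma hG : Continuous G := by
  refine continuous_generateFrom_iff.mpr ?_
  rintro s ⟨c, rfl | rfl⟩ <;> obtain ⟨c1, c2, rfl⟩ := lex_cases c
  · -- s = Ioi c
    rcases Xomega.cases c1 with ⟨m, rfl⟩ | rfl
    · match m with
      | 0 =>
        rcases Xomega.cases c2 with ⟨j, rfl⟩ | rfl
        · refine open_preG (U := Iio (toLex (xw, xn 2)) ∪ Ioi (toLex (xw, xn (j + 2))))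
            (isOpen_Iio.union isOpen_Ioi) ?_
          refine forallAll _ ?_ ?_ ?_ ?_ ?_ <;>
            simp +contextual [tlt, Nat.add_lt_add_iff_right, Nat.add_right_cancel_iff] <;>
            first
            | omega
            | try tauto
        · refine open_preG (U := Iio (toLex (xw, xn 2))) isOpen_Iio ?_
          refine forallAll _ ?_ ?_ ?_ ?_ ?_ <;>
            simp +contextual [tlt, Nat.add_lt_add_iff_right, Nat.add_right_cancel_iff] <;>
            try tauto
      | (m + 1) =>
        refine open_preG (U := Ioo (toLex (xn m, c2)) (toLex (xw, xn 2))) isOpen_Ioo ?_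
        refine forallAll _ ?_ ?_ ?_ ?_ ?_ <;>
          simp +contextual [tlt, Nat.add_lt_add_iff_right, Nat.add_right_cancel_iff] <;>
          try tauto
    · rcases Xomega.cases c2 with ⟨j, rfl⟩ | rfl
      · refine open_preG (U := Ioo (toLex (xw, xn 0)) (toLex (xw, xn 2))) isOpen_Ioo ?_
        refine forallAll _ ?_ ?_ ?_ ?_ ?_ <;>
          simp +contextual [tlt, Nat.add_lt_add_iff_right, Nat.add_right_cancel_iff] <;>
          first
          | omega
          | try tauto
      · refine open_preG (U := (∅ : Set (Xomega ×ₗ Xomega))) isOpen_empty ?_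
        refine forallAll _ ?_ ?_ ?_ ?_ ?_ <;>
          simp +contextual [tlt, Nat.add_lt_add_iff_right, Nat.add_right_cancel_iff]
  · -- s = Iio c
    rcases Xomega.cases c1 with ⟨m, rfl⟩ | rfl
    · match m with
      | 0 =>
        rcases Xomega.cases c2 with ⟨j, rfl⟩ | rfl
        · refine open_preG (U := Ioo (toLex (xw, xn 1)) (toLex (xw, xn (j + 2)))) isOpen_Ioo ?_
          refine forallAll _ ?_ ?_ ?_ ?_ ?_ <;>
            simp +contextual [tlt, Nat.add_lt_add_iff_right, Nat.add_right_cancel_iff] <;>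
            first
            | omega
            | try tauto
        · refine open_preG (U := Ioo (toLex (xw, xn 1)) (toLex (xw, xw))) isOpen_Ioo ?_
          refine forallAll _ ?_ ?_ ?_ ?_ ?_ <;>
            simp +contextual [tlt, Nat.add_lt_add_iff_right, Nat.add_right_cancel_iff] <;>
            try tauto
      | (m + 1) =>
        refine open_preG (U := Iio (toLex (xn m, c2)) ∪ Ioi (toLex (xw, xn 1)))
          (isOpen_Iio.union isOpen_Ioi) ?_
        refine forallAll _ ?_ ?_ ?_ ?_ ?_ <;>
          simp +contextual [tlt, Nat.add_lt_add_iff_right, Nat.add_right_cancel_iff] <;>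
          try tauto
    · rcases Xomega.cases c2 with ⟨j, rfl⟩ | rfl
      · match j with
        | 0 =>
          refine open_preG (U := Iio (toLex (xw, xn 0)) ∪ Ioi (toLex (xw, xn 1)))
            (isOpen_Iio.union isOpen_Ioi) ?_
          refine forallAll _ ?_ ?_ ?_ ?_ ?_ <;>
            simp +contextual [tlt, Nat.add_lt_add_iff_right, Nat.add_right_cancel_iff] <;>
            try tauto
        | (j + 1) =>
          refine open_preG (U := Iio (toLex (xw, xn 1)) ∪ Ioi (toLex (xw, xn 1)))
            (isOpen_Iio.union isOpen_Ioi) ?_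
          refine forallAll _ ?_ ?_ ?_ ?_ ?_ <;>
            simp +contextual [tlt, Nat.add_lt_add_iff_right, Nat.add_right_cancel_iff] <;>
            first
            | omega
            | try tauto
      · refine open_preG (U := Iio (toLex (xw, xn 1)) ∪ Ioi (toLex (xw, xn 1)))
          (isOpen_Iio.union isOpen_Ioi) ?_
        refine forallAll _ ?_ ?_ ?_ ?_ ?_ <;>
          simp +contextual [tlt, Nat.add_lt_add_iff_right, Nat.add_right_cancel_iff] <;>
          try tauto

/-- The homeomorphism. -/
noncomputable def homeo : ↥Y19 ≃ₜ (Xomega ×ₗ Xomega) :=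
  { e with
    continuous_toFun := hF
    continuous_invFun := hG.subtype_mk _ }

end Stmt19

/-- `Y`, with the subspace topology from `X ×ₗ X`, is homeomorphic to `X ×ₗ X`. -/
theorem stmt_19 : Nonempty (↥Y19 ≃ₜ (Xomega ×ₗ Xomega)) := by
  exact ⟨Stmt19.homeo⟩
end
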